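/- arXiv:math/0609119 — 2 statements merged into one kernel-verified Lean document; each statement's English description precedes it below -/
import Mathlib

section
/- For all integers n and k with n − 3 ≥ k ≥ 2 and every field 𝔽 of characteristic 2, there exists S_k ⊆ C([n],k) such that (1) the simplicial matroid Sim_k^n(S_k) over 𝔽 is triangulable but not strongly triangulable, and (2) no (k−1)-subset of [n] is simplicial in the k-hyperclique complex ⟨S_k⟩. -/
/-!
Common definitions for simplicial matroids, following Cordovil–Lemos–Linhares Sales,
"Dirac's theorem on simplicial matroids".

We model `[n] = {1,…,n}` by `Fin n`, and a subset of `[n]` by a `Finset (Fin n)`.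
A family `S_k ⊆ C([n],k)` is a `Finset (Finset (Fin n))` (all of whose members
have cardinality `k`, which is imposed by hypotheses in the theorems).
-/

open Finset

/-- The incidence number `[F' : F]`: if `F = i₁ < i₂ < ⋯ < iₘ` and `F' = F \ {iⱼ}`
then `[F' : F] = (-1)ʲ` (with `j` the 1-based position of the deleted element),
and `[F' : F] = 0` otherwise. -/
def inc {n : ℕ} (F' F : Finset (Fin n)) : ℤ :=
  ∑ i ∈ F, if F' = F.erase i then (-1 : ℤ) ^ (F.filter (fun j => j ≤ i)).card else 0

/-- The family `C([n], m)` of `m`-element subsets of `[n]`, as a type. -/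
abbrev Csets (n m : ℕ) := {F : Finset (Fin n) // F.card = m}

/-- `∂_k F`, the boundary of a single `k`-subset `F` of `[n]`,
as a vector of `𝔽^{C([n],k-1)}`. -/
def bvec (𝔽 : Type*) [Field 𝔽] (n k : ℕ) (F : Finset (Fin n)) : Csets n (k - 1) → 𝔽 :=
  fun F' => ((inc F'.1 F : ℤ) : 𝔽)

/-- Independence in the simplicial matroid `Sim_k^n(S_k)` over `𝔽`:
`X ⊆ S_k` is independent iff the vectors `∂_k F`, `F ∈ X`, are linearly independent. -/
def SimIndep (𝔽 : Type*) [Field 𝔽] (n k : ℕ) (Sk X : Finset (Finset (Fin n))) : Prop :=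
  X ⊆ Sk ∧ LinearIndependent 𝔽 (fun F : X => bvec 𝔽 n k F.1)

/-- A circuit of `Sim_k^n(S_k)`: a minimal dependent subset of the ground set. -/
def SimCircuit (𝔽 : Type*) [Field 𝔽] (n k : ℕ) (Sk C : Finset (Finset (Fin n))) : Prop :=
  C ⊆ Sk ∧ ¬ LinearIndependent 𝔽 (fun F : C => bvec 𝔽 n k F.1) ∧
    ∀ C' ⊂ C, LinearIndependent 𝔽 (fun F : C' => bvec 𝔽 n k F.1)

/-- The rank (in `Sim_k^n`) of a set `X` of `k`-subsets of `[n]`: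
the dimension of the span of the boundaries of its members. -/
noncomputable def simRank (𝔽 : Type*) [Field 𝔽] (n k : ℕ) (X : Finset (Finset (Fin n))) : ℕ :=
  Module.finrank 𝔽 (Submodule.span 𝔽 ((fun F => bvec 𝔽 n k F) '' (X : Set (Finset (Fin n)))))

/-- A cocircuit of `Sim_k^n(S_k)`, i.e. a circuit of the dual matroid:
a minimal set `C ⊆ S_k` whose complement does not span (`X` is independent in the dual
matroid iff `r(E ∖ X) = r(E)`). -/
def SimCocircuit (𝔽 : Type*) [Field 𝔽] (n k : ℕ) (Sk C : Finset (Finset (Fin n))) : Prop :=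
  C ⊆ Sk ∧ simRank 𝔽 n k (Sk \ C) < simRank 𝔽 n k Sk ∧
    ∀ C' ⊂ C, simRank 𝔽 n k (Sk \ C') = simRank 𝔽 n k Sk

/-- The boundary map `∂_k : 𝔽^{S_k} → 𝔽^{C([n],k-1)}`. -/
noncomputable def bdryMap (𝔽 : Type*) [Field 𝔽] (n k : ℕ) (Sk : Finset (Finset (Fin n))) :
    (↥Sk → 𝔽) →ₗ[𝔽] (Csets n (k - 1) → 𝔽) :=
  Matrix.mulVecLin (Matrix.of fun (F' : Csets n (k - 1)) (F : ↥Sk) => ((inc F'.1 F.1 : ℤ) : 𝔽))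

/-- The coboundary `δ^{k-1} V` of a `(k-1)`-subset `V` of `[n]`,
as a vector of `𝔽^{S_k}`; its `F`-coordinate is `[V : F]`. -/
def cobdry (𝔽 : Type*) [Field 𝔽] {n : ℕ} (Sk : Finset (Finset (Fin n)))
    (V : Finset (Fin n)) : ↥Sk → 𝔽 :=
  fun F => ((inc V F.1 : ℤ) : 𝔽)

/-- The boundary `∂_{k+1} X` of a `(k+1)`-subset `X` of `[n]`, regarded as a vector
of `𝔽^{S_k}`; its `F`-coordinate is `[F : X]`. -/
def pbdry (𝔽 : Type*) [Field 𝔽] {n : ℕ} (Sk : Finset (Finset (Fin n)))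
    (X : Finset (Fin n)) : ↥Sk → 𝔽 :=
  fun F => ((inc F.1 X : ℤ) : 𝔽)

open scoped Classical in
/-- The support of a vector of `𝔽^{S_k}`, as a set of `k`-subsets of `[n]`. -/
noncomputable def suppFin {𝔽 : Type*} [Field 𝔽] {n : ℕ} {Sk : Finset (Finset (Fin n))}
    (v : ↥Sk → 𝔽) : Finset (Finset (Fin n)) :=
  (Sk.attach.filter fun F => v F ≠ 0).image Subtype.val

/-- `supp(δ^{k-1} V) ⊆ S_k`. -/
noncomputable def suppδ (𝔽 : Type*) [Field 𝔽] {n : ℕ} (Sk : Finset (Finset (Fin n)))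
    (V : Finset (Fin n)) : Finset (Finset (Fin n)) :=
  suppFin (cobdry 𝔽 Sk V)

/-- The cocircuit space of `Sim_k^n(S_k)`: the orthogonal complement, with respect to the
standard bilinear form on `𝔽^{S_k}`, of the circuit space `ker ∂_k`. -/
noncomputable def cocircSpace (𝔽 : Type*) [Field 𝔽] (n k : ℕ) (Sk : Finset (Finset (Fin n))) :
    Submodule 𝔽 (↥Sk → 𝔽) where
  carrier := {w | ∀ v ∈ LinearMap.ker (bdryMap 𝔽 n k Sk), ∑ F, v F * w F = 0}
  zero_mem' := by intro v hv; simp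
  add_mem' := by
    intro a b ha hb v hv
    have h1 := ha v hv
    have h2 := hb v hv
    simp only [Pi.add_apply, mul_add, Finset.sum_add_distrib]
    rw [h1, h2, add_zero]
  smul_mem' := by
    intro c w hw v hv
    have h := hw v hv
    simp only [Pi.smul_apply, smul_eq_mul]
    calc ∑ F, v F * (c * w F) = ∑ F, c * (v F * w F) := by
          exact Finset.sum_congr rfl fun F _ => by ring
      _ = c * ∑ F, v F * w F := (Finset.mul_sum _ _ _).symm
      _ = 0 := by rw [h, mul_zero]

/-- The faces of the `k`-hyperclique complex `⟨S_k⟩`: all `F ⊆ [n]` with `|F| < k`,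
together with all `F` every `k`-element subset of which lies in `S_k`. -/
def IsFace {n : ℕ} (k : ℕ) (Sk : Finset (Finset (Fin n))) (F : Finset (Fin n)) : Prop :=
  F.card < k ∨ ∀ G ⊆ F, G.card = k → G ∈ Sk

/-- A facet of `⟨S_k⟩`: an inclusion-maximal face. -/
def IsFacet {n : ℕ} (k : ℕ) (Sk : Finset (Finset (Fin n))) (F : Finset (Fin n)) : Prop :=
  IsFace k Sk F ∧ ∀ G, IsFace k Sk G → F ⊆ G → F = G

/-- `V` is simplicial in `⟨S_k⟩` if there is exactly one facet `X` of `⟨S_k⟩`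
with `V ⊊ X`. -/
def SimplicialFace {n : ℕ} (k : ℕ) (Sk : Finset (Finset (Fin n))) (V : Finset (Fin n)) : Prop :=
  ∃! X, IsFacet k Sk X ∧ V ⊂ X

/-- The `k`-skeleta of the complexes `Δ_0 = ⟨S_k⟩`, `Δ_{j+1} = Δ_j ∖∖ V_j`, where
`Δ ∖∖ V = ⟨(skeleton of Δ) ∖ supp(δ^{k-1} V)⟩` (0-indexed). -/
noncomputable def delSeq (𝔽 : Type*) [Field 𝔽] {n : ℕ} (Sk : Finset (Finset (Fin n)))
    (V : ℕ → Finset (Fin n)) : ℕ → Finset (Finset (Fin n))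
  | 0 => Sk
  | j + 1 => delSeq 𝔽 Sk V j \ suppδ 𝔽 (delSeq 𝔽 Sk V j) (V j)

/-- `C*_j := supp(δ^{k-1} V_j) ∖ ⋃_{i<j} supp(δ^{k-1} V_i)` (0-indexed). -/
noncomputable def Cstar (𝔽 : Type*) [Field 𝔽] {n : ℕ} (Sk : Finset (Finset (Fin n)))
    (V : ℕ → Finset (Fin n)) (j : ℕ) : Finset (Finset (Fin n)) :=
  suppδ 𝔽 Sk (V j) \ (Finset.range j).biUnion (fun i => suppδ 𝔽 Sk (V i))

/-- `(V_1,…,V_r)` (0-indexed: `V 0, …, V (r-1)`) is a basic linear sequence for `⟨S_k⟩`,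
where `r` is the rank of `Sim_k^n(S_k)`: each `V_j` is a `(k-1)`-subset of `[n]` and each
`C*_j` is a cocircuit of `Sim_k^n(S_k(Δ_{j-1}))`. -/
def BasicLinearSeq (𝔽 : Type*) [Field 𝔽] (n k : ℕ) (Sk : Finset (Finset (Fin n))) (r : ℕ)
    (V : ℕ → Finset (Fin n)) : Prop :=
  simRank 𝔽 n k Sk = r ∧ (∀ j < r, (V j).card = k - 1) ∧
    ∀ j < r, SimCocircuit 𝔽 n k (delSeq 𝔽 Sk V j) (Cstar 𝔽 Sk V j)

/-- `⟨S_k⟩` is D-perfect: there is a basic linear sequence `V_1,…,V_r` such that each `V_j`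
is simplicial in `Δ_{j-1}`. -/
def DPerfect (𝔽 : Type*) [Field 𝔽] (n k : ℕ) (Sk : Finset (Finset (Fin n))) : Prop :=
  ∃ V : ℕ → Finset (Fin n),
    BasicLinearSeq 𝔽 n k Sk (simRank 𝔽 n k Sk) V ∧
      ∀ j < simRank 𝔽 n k Sk, SimplicialFace k (delSeq 𝔽 Sk V j) (V j)

/-- A flat of `Sim_k^n(S_k)`: a closed subset of the ground set. -/
def SimFlat (𝔽 : Type*) [Field 𝔽] (n k : ℕ) (Sk X : Finset (Finset (Fin n))) : Prop :=
  X ⊆ Sk ∧ ∀ F ∈ Sk,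
    bvec 𝔽 n k F ∈ Submodule.span 𝔽 ((fun G => bvec 𝔽 n k G) '' (X : Set (Finset (Fin n)))) →
      F ∈ X

/-- A hyperplane of `Sim_k^n(S_k)`: a flat of rank one less than the rank of the matroid. -/
def SimHyperplane (𝔽 : Type*) [Field 𝔽] (n k : ℕ) (Sk H : Finset (Finset (Fin n))) : Prop :=
  SimFlat 𝔽 n k Sk H ∧ simRank 𝔽 n k H + 1 = simRank 𝔽 n k Sk

/-- A modular flat of `Sim_k^n(S_k)`:
`r(X) + r(Y) = r(X ∪ Y) + r(X ∩ Y)` for every flat `Y`. -/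
def ModularFlat (𝔽 : Type*) [Field 𝔽] (n k : ℕ) (Sk X : Finset (Finset (Fin n))) : Prop :=
  SimFlat 𝔽 n k Sk X ∧ ∀ Y, SimFlat 𝔽 n k Sk Y →
    simRank 𝔽 n k X + simRank 𝔽 n k Y = simRank 𝔽 n k (X ∪ Y) + simRank 𝔽 n k (X ∩ Y)

open scoped Classical in
/-- The closure of `X` in `Sim_k^n(S_k)`. -/
noncomputable def simClosure (𝔽 : Type*) [Field 𝔽] (n k : ℕ)
    (Sk X : Finset (Finset (Fin n))) : Finset (Finset (Fin n)) :=
  Sk.filter fun F =>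
    bvec 𝔽 n k F ∈ Submodule.span 𝔽 ((fun G => bvec 𝔽 n k G) '' (X : Set (Finset (Fin n))))

/-- `Sim_k^n(S_k)` is supersolvable: it admits a maximal chain of modular flats
`cl(∅) = X_0 ⊊ X_1 ⊊ ⋯ ⊊ X_r = S_k`, `r` the rank. -/
def Supersolvable (𝔽 : Type*) [Field 𝔽] (n k : ℕ) (Sk : Finset (Finset (Fin n))) : Prop :=
  ∃ X : ℕ → Finset (Finset (Fin n)),
    X 0 = simClosure 𝔽 n k Sk ∅ ∧ X (simRank 𝔽 n k Sk) = Sk ∧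
      (∀ i < simRank 𝔽 n k Sk, X i ⊂ X (i + 1)) ∧
      ∀ i ≤ simRank 𝔽 n k Sk, ModularFlat 𝔽 n k Sk (X i)

/-- `H` is a dense hyperplane of `Sim_k^n(ground)`: a hyperplane of the form
`ground ∖ supp(δ^{k-1} V)` for some `(k-1)`-subset `V` simplicial in `⟨ground⟩`. -/
def DenseHyp (𝔽 : Type*) [Field 𝔽] (n k : ℕ) (ground H : Finset (Finset (Fin n))) : Prop :=
  SimHyperplane 𝔽 n k ground H ∧
    ∃ V : Finset (Fin n), V.card = k - 1 ∧ SimplicialFace k ground V ∧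
      H = ground \ suppδ 𝔽 ground V

/-- `Sim_k^n(S_k)` is superdense: there is a chain `∅ = X_0 ⊊ X_1 ⊊ ⋯ ⊊ X_r = S_k` of flats
(`r` the rank) with each `X_i` a dense hyperplane of `Sim_k^n(X_{i+1})`. -/
def Superdense (𝔽 : Type*) [Field 𝔽] (n k : ℕ) (Sk : Finset (Finset (Fin n))) : Prop :=
  ∃ X : ℕ → Finset (Finset (Fin n)),
    X 0 = ∅ ∧ X (simRank 𝔽 n k Sk) = Sk ∧
      (∀ i ≤ simRank 𝔽 n k Sk, SimFlat 𝔽 n k Sk (X i)) ∧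
      (∀ i < simRank 𝔽 n k Sk, X i ⊂ X (i + 1)) ∧
      ∀ i < simRank 𝔽 n k Sk, DenseHyp 𝔽 n k (X (i + 1)) (X i)

/-- `Sim_k^n(S_k)` is triangulable over `𝔽`: the boundaries of the `(k+1)`-faces of `⟨S_k⟩`
span the circuit space `ker ∂_k`. -/
def Triangulable (𝔽 : Type*) [Field 𝔽] (n k : ℕ) (Sk : Finset (Finset (Fin n))) : Prop :=
  Submodule.span 𝔽
      {v : ↥Sk → 𝔽 | ∃ X : Finset (Fin n), X.card = k + 1 ∧ IsFace k Sk X ∧ v = pbdry 𝔽 Sk X}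
    = LinearMap.ker (bdryMap 𝔽 n k Sk)

/-- `Sim_k^n(S_k)` is strongly triangulable over `𝔽`: there are `(k+1)`-faces `X_1,…,X_{m'}`
of `⟨S_k⟩` whose boundaries span `ker ∂_k` and such that every circuit `C` has a
representing vector `C⃗` with support `C` which is a combination, with nonzero coefficients,
of boundaries `∂_{k+1} X_{i_j}` with `⋃_{F ∈ C} F = ⋃_j X_{i_j}`. -/
def StronglyTriangulable (𝔽 : Type*) [Field 𝔽] (n k : ℕ)
    (Sk : Finset (Finset (Fin n))) : Prop :=
  ∃ (m' : ℕ) (Xs : Fin m' → Finset (Fin n)),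
    (∀ i, (Xs i).card = k + 1 ∧ IsFace k Sk (Xs i)) ∧
    Submodule.span 𝔽 (Set.range fun i => pbdry 𝔽 Sk (Xs i)) = LinearMap.ker (bdryMap 𝔽 n k Sk) ∧
    ∀ C, SimCircuit 𝔽 n k Sk C →
      ∃ (s : ℕ) (idx : Fin s → Fin m') (a : Fin s → 𝔽) (Cv : ↥Sk → 𝔽),
        (∀ j, a j ≠ 0) ∧ suppFin Cv = C ∧
        Cv = ∑ j, a j • pbdry 𝔽 Sk (Xs (idx j)) ∧
        C.biUnion id = Finset.univ.biUnion fun j : Fin s => Xs (idx j)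

/-- The simple graph `([n], S_2)`. -/
def graphOf {n : ℕ} (S2 : Finset (Finset (Fin n))) : SimpleGraph (Fin n) where
  Adj u v := u ≠ v ∧ ({u, v} : Finset (Fin n)) ∈ S2
  symm := by
    constructor
    intro u v h
    exact ⟨h.1.symm, by rw [Finset.pair_comm]; exact h.2⟩
  loopless := by constructor; intro u h; exact h.1 rfl

/-- A simple graph is chordal if every cycle of length at least four has a chord, i.e. an
edge of the graph joining two non-consecutive vertices of the cycle. -/
def Chordal {α : Type*} (G : SimpleGraph α) : Prop :=
  ∀ (v : α) (w : G.Walk v v), w.IsCycle → 4 ≤ w.length →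
    ∃ u₁ u₂, u₁ ∈ w.support ∧ u₂ ∈ w.support ∧ G.Adj u₁ u₂ ∧ s(u₁, u₂) ∉ w.edges

/-! ### Auxiliary development for `stmt12` -/

namespace St12

open Finset

/-- The interval `{a,…,b}` inside `Fin n`. -/
def iv (n a b : ℕ) (h : b < n) : Finset (Fin n) :=
  Finset.attachFin (Finset.Icc a b) (fun m hm => by
    rw [Finset.mem_Icc] at hm; omega)

lemma mem_iv {n a b : ℕ} {h : b < n} {x : Fin n} :
    x ∈ iv n a b h ↔ a ≤ (x : ℕ) ∧ (x : ℕ) ≤ b := by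
  simp [iv, Finset.mem_attachFin, Finset.mem_Icc]

lemma card_iv {n a b : ℕ} (h : b < n) : (iv n a b h).card = b + 1 - a := by
  simp [iv, Finset.card_attachFin, Nat.card_Icc]

section Main

variable {𝔽 : Type*} [Field 𝔽] [CharP 𝔽 2] {n k : ℕ}

/-! #### Characteristic-two incidence computations -/

lemma inc_cast (𝔽 : Type*) [Field 𝔽] [CharP 𝔽 2] (F' F : Finset (Fin n)) :
    ((inc F' F : ℤ) : 𝔽) = if ∃ i ∈ F, F' = F.erase i then 1 else 0 := by
  classical
  have : ((inc F' F : ℤ) : 𝔽)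
      = ∑ i ∈ F, if F' = F.erase i then (1 : 𝔽) else 0 := by
    unfold inc
    push_cast
    refine Finset.sum_congr rfl fun i _ => ?_
    split_ifs with h
    · push_cast
      rw [CharTwo.neg_eq (1 : 𝔽), one_pow]
    · simp
  rw [this]
  split_ifs with h
  · obtain ⟨i, hi, hFi⟩ := h
    rw [Finset.sum_eq_single_of_mem i hi]
    · rw [if_pos hFi]
    · intro j hj hji
      rw [if_neg]
      intro hEq
      have hij : F.erase i = F.erase j := by rw [← hFi, hEq]
      have : i ∈ F.erase i := by
        rw [hij]; exact Finset.mem_erase.2 ⟨Ne.symm hji, hi⟩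
      simp at this
  · refine Finset.sum_eq_zero fun i hi => ?_
    rw [if_neg]
    exact fun hEq => h ⟨i, hi, hEq⟩

lemma inc_cast_subset (𝔽 : Type*) [Field 𝔽] [CharP 𝔽 2] {F' F : Finset (Fin n)}
    (hc : F'.card + 1 = F.card) :
    ((inc F' F : ℤ) : 𝔽) = if F' ⊆ F then 1 else 0 := by
  classical
  rw [inc_cast 𝔽]
  refine if_congr ?_ rfl rfl
  constructor
  · rintro ⟨i, hi, rfl⟩; exact Finset.erase_subset _ _
  · intro hsub
    have hcard : (F \ F').card = 1 := by
      rw [Finset.card_sdiff_of_subset hsub]; omega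
    obtain ⟨i, hi⟩ := Finset.card_eq_one.1 hcard
    have hiF : i ∈ F ∧ i ∉ F' := by
      have : i ∈ F \ F' := hi ▸ Finset.mem_singleton_self i
      exact ⟨(Finset.mem_sdiff.1 this).1, (Finset.mem_sdiff.1 this).2⟩
    refine ⟨i, hiF.1, ?_⟩
    apply Finset.eq_of_subset_of_card_le
    · exact Finset.subset_erase.2 ⟨hsub, hiF.2⟩
    · rw [Finset.card_erase_of_mem hiF.1]; omega

/-! #### The construction -/

variable (n k)

def uu (hn : k + 3 ≤ n) : Fin n := ⟨0, by omega⟩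

def Aset (hn : k + 3 ≤ n) : Finset (Fin n) := iv n 1 2 (by omega)

def Bset (hn : k + 3 ≤ n) : Finset (Fin n) := iv n 3 (k + 2) (by omega)

def ABset (hn : k + 3 ≤ n) : Finset (Fin n) := iv n 1 (k + 2) (by omega)

def Gset (hn : k + 3 ≤ n) : Finset (Fin n) := iv n 0 (k + 2) (by omega)

def SkS (hn : k + 3 ≤ n) : Finset (Finset (Fin n)) :=
  ((Gset n k hn).powersetCard k).filter
    (fun F => ¬ Aset n k hn ⊆ F ∧ ¬ Bset n k hn ⊆ F)

def CC (hn : k + 3 ≤ n) : Finset (Finset (Fin n)) :=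
  (SkS n k hn).filter (fun F => uu n k hn ∉ F)

def Fac (hn : k + 3 ≤ n) (α β : Fin n) : Finset (Fin n) :=
  insert (uu n k hn) ((ABset n k hn) \ {α, β})

variable {n k}
variable (hk : 2 ≤ k) (hn : k + 3 ≤ n)

/-! #### Basic combinatorics -/

lemma card_A : (Aset n k hn).card = 2 := by rw [Aset, card_iv]

lemma card_B : (Bset n k hn).card = k := by rw [Bset, card_iv]; omega

lemma card_AB : (ABset n k hn).card = k + 2 := by rw [ABset, card_iv]; omega

lemma card_G : (Gset n k hn).card = k + 3 := by rw [Gset, card_iv]; omega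

lemma A_union_B : Aset n k hn ∪ Bset n k hn = ABset n k hn := by
  ext x
  simp only [Finset.mem_union, Aset, Bset, ABset, mem_iv]
  omega

lemma A_disj_B {x : Fin n} (hx : x ∈ Aset n k hn) : x ∉ Bset n k hn := by
  simp only [Aset, Bset, mem_iv] at *
  omega

lemma A_sub_AB : Aset n k hn ⊆ ABset n k hn := by
  intro x hx
  simp only [Aset, ABset, mem_iv] at *
  omega

lemma B_sub_AB : Bset n k hn ⊆ ABset n k hn := by
  intro x hx
  simp only [Bset, ABset, mem_iv] at *
  omega

lemma AB_sub_G : ABset n k hn ⊆ Gset n k hn := by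
  intro x hx
  simp only [ABset, Gset, mem_iv] at *
  omega

lemma u_not_mem_AB : uu n k hn ∉ ABset n k hn := by
  simp [uu, ABset, mem_iv]

lemma u_not_mem_A : uu n k hn ∉ Aset n k hn := by
  simp [uu, Aset, mem_iv]

lemma u_not_mem_B : uu n k hn ∉ Bset n k hn := by
  simp [uu, Bset, mem_iv]

lemma u_mem_G : uu n k hn ∈ Gset n k hn := by
  simp [uu, Gset, mem_iv]

lemma AB_eq_G_erase : ABset n k hn = (Gset n k hn).erase (uu n k hn) := by
  ext x
  simp only [ABset, Gset, Finset.mem_erase, mem_iv, Ne, Fin.ext_iff, uu]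
  omega

lemma A_ne_B_elt {α β : Fin n} (hα : α ∈ Aset n k hn) (hβ : β ∈ Bset n k hn) : α ≠ β := by
  intro h; exact A_disj_B hn hα (h ▸ hβ)

lemma mem_SkS {F : Finset (Fin n)} :
    F ∈ SkS n k hn ↔ F ⊆ Gset n k hn ∧ F.card = k ∧
      ¬ Aset n k hn ⊆ F ∧ ¬ Bset n k hn ⊆ F := by
  simp only [SkS, Finset.mem_filter, Finset.mem_powersetCard]
  tauto

lemma card_of_mem_SkS {F : Finset (Fin n)} (hF : F ∈ SkS n k hn) : F.card = k :=
  ((mem_SkS hn).1 hF).2.1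

lemma mem_CC {F : Finset (Fin n)} :
    F ∈ CC n k hn ↔ F ∈ SkS n k hn ∧ uu n k hn ∉ F := by
  simp [CC, Finset.mem_filter]

/-- Elements of `Sk` not containing `u` have the shape `AB \ {α, β}`. -/
lemma shapeC {F : Finset (Fin n)} (hF : F ∈ SkS n k hn) (hu : uu n k hn ∉ F) :
    ∃ α ∈ Aset n k hn, ∃ β ∈ Bset n k hn, F = ABset n k hn \ {α, β} := by
  classical
  obtain ⟨hFG, hFc, hFA, hFB⟩ := (mem_SkS hn).1 hF
  have hFAB : F ⊆ ABset n k hn := by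
    rw [AB_eq_G_erase hn]
    exact Finset.subset_erase.2 ⟨hFG, hu⟩
  have hD : (ABset n k hn \ F).card = 2 := by
    rw [Finset.card_sdiff_of_subset hFAB, card_AB hn, hFc]; omega
  obtain ⟨α, hαA, hαF⟩ : ∃ α ∈ Aset n k hn, α ∉ F := by
    by_contra h; push_neg at h; exact hFA h
  obtain ⟨β, hβB, hβF⟩ : ∃ β ∈ Bset n k hn, β ∉ F := by
    by_contra h; push_neg at h; exact hFB h
  have hαβ : α ≠ β := A_ne_B_elt hn hαA hβB
  have hsub : ({α, β} : Finset (Fin n)) ⊆ ABset n k hn \ F := by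
    intro x hx
    rcases Finset.mem_insert.1 hx with rfl | hx
    · exact Finset.mem_sdiff.2 ⟨A_sub_AB hn hαA, hαF⟩
    · rw [Finset.mem_singleton] at hx; subst hx
      exact Finset.mem_sdiff.2 ⟨B_sub_AB hn hβB, hβF⟩
  have hpair : ({α, β} : Finset (Fin n)).card = 2 := Finset.card_pair hαβ
  have hDeq : ABset n k hn \ F = {α, β} :=
    (Finset.eq_of_subset_of_card_le hsub (by omega)).symm
  refine ⟨α, hαA, β, hβB, ?_⟩
  rw [← hDeq, Finset.sdiff_sdiff_self_left, Finset.inter_eq_right.2 hFAB]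

lemma pair_sub_AB {α β : Fin n} (hα : α ∈ Aset n k hn) (hβ : β ∈ Bset n k hn) :
    ({α, β} : Finset (Fin n)) ⊆ ABset n k hn := by
  intro x hx
  rcases Finset.mem_insert.1 hx with rfl | hx
  · exact A_sub_AB hn hα
  · rw [Finset.mem_singleton] at hx; subst hx; exact B_sub_AB hn hβ

lemma card_AB_sdiff_pair {α β : Fin n} (hα : α ∈ Aset n k hn) (hβ : β ∈ Bset n k hn) :
    (ABset n k hn \ {α, β}).card = k := by
  rw [Finset.card_sdiff_of_subset (pair_sub_AB hn hα hβ), card_AB hn,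
    Finset.card_pair (A_ne_B_elt hn hα hβ)]
  omega

lemma shape_mem {α β : Fin n} (hα : α ∈ Aset n k hn) (hβ : β ∈ Bset n k hn) :
    ABset n k hn \ {α, β} ∈ CC n k hn := by
  classical
  rw [mem_CC hn, mem_SkS hn]
  refine ⟨⟨Finset.Subset.trans (Finset.sdiff_subset) (AB_sub_G hn),
    card_AB_sdiff_pair hn hα hβ, ?_, ?_⟩, ?_⟩
  · intro h
    have : α ∈ ABset n k hn \ {α, β} := h hα
    simp at this
  · intro h
    have : β ∈ ABset n k hn \ {α, β} := h hβ
    simp at this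
  · intro h
    exact u_not_mem_AB hn (Finset.mem_sdiff.1 h).1

lemma CC_eq_image :
    CC n k hn = ((Aset n k hn) ×ˢ (Bset n k hn)).image
      (fun p => ABset n k hn \ {p.1, p.2}) := by
  classical
  ext F
  simp only [Finset.mem_image, Finset.mem_product]
  constructor
  · intro hF
    obtain ⟨α, hα, β, hβ, rfl⟩ := shapeC hn ((mem_CC hn).1 hF).1 ((mem_CC hn).1 hF).2
    exact ⟨(α, β), ⟨hα, hβ⟩, rfl⟩
  · rintro ⟨⟨α, β⟩, ⟨hα, hβ⟩, rfl⟩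
    exact shape_mem hn hα hβ

lemma pair_eta {α β : Fin n} (hα : α ∈ Aset n k hn) (hβ : β ∈ Bset n k hn) :
    ABset n k hn \ (ABset n k hn \ {α, β}) = {α, β} := by
  rw [Finset.sdiff_sdiff_self_left, Finset.inter_eq_right.2 (pair_sub_AB hn hα hβ)]

lemma shape_inj {α β α' β' : Fin n} (hα : α ∈ Aset n k hn) (hβ : β ∈ Bset n k hn)
    (hα' : α' ∈ Aset n k hn) (hβ' : β' ∈ Bset n k hn)
    (h : ABset n k hn \ {α, β} = ABset n k hn \ {α', β'}) : α = α' ∧ β = β' := by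
  classical
  have hpp : ({α, β} : Finset (Fin n)) = {α', β'} := by
    rw [← pair_eta hn hα hβ, ← pair_eta hn hα' hβ', h]
  have hαm : α ∈ ({α', β'} : Finset (Fin n)) := hpp ▸ Finset.mem_insert_self _ _
  have hβm : β ∈ ({α', β'} : Finset (Fin n)) := hpp ▸
    Finset.mem_insert_of_mem (Finset.mem_singleton_self _)
  have hαα' : α = α' := by
    rcases Finset.mem_insert.1 hαm with h1 | h1
    · exact h1
    · rw [Finset.mem_singleton] at h1
      exact absurd (h1 ▸ hβ') (A_disj_B hn hα)
  have hββ' : β = β' := by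
    rcases Finset.mem_insert.1 hβm with h1 | h1
    · exact absurd (h1 ▸ hα') (fun hc => A_disj_B hn hc hβ)
    · exact Finset.mem_singleton.1 h1
  exact ⟨hαα', hββ'⟩

end Main

end St12


namespace St12

section Faces

variable {𝔽 : Type*} [Field 𝔽] [CharP 𝔽 2] {n k : ℕ}
variable (hk : 2 ≤ k) (hn : k + 3 ≤ n)

lemma u_not_mem_sdiff {α β : Fin n} : uu n k hn ∉ ABset n k hn \ {α, β} :=
  fun h => u_not_mem_AB hn (Finset.mem_sdiff.1 h).1

lemma Fac_card {α β : Fin n} (hα : α ∈ Aset n k hn) (hβ : β ∈ Bset n k hn) :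
    (Fac n k hn α β).card = k + 1 := by
  rw [Fac, Finset.card_insert_of_notMem (u_not_mem_sdiff hn),
    card_AB_sdiff_pair hn hα hβ]

lemma A_mem_not_mem_Fac {α β : Fin n} (hα : α ∈ Aset n k hn) :
    α ∉ Fac n k hn α β := by
  rw [Fac, Finset.mem_insert]
  rintro (h | h)
  · exact u_not_mem_A hn (h ▸ hα)
  · simp at h

lemma B_mem_not_mem_Fac {α β : Fin n} (hβ : β ∈ Bset n k hn) :
    β ∉ Fac n k hn α β := by
  rw [Fac, Finset.mem_insert]
  rintro (h | h)
  · exact u_not_mem_B hn (h ▸ hβ)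
  · simp at h

lemma mem_Fac_of_AB {α β x : Fin n} (hx : x ∈ ABset n k hn) (hxα : x ≠ α) (hxβ : x ≠ β) :
    x ∈ Fac n k hn α β := by
  rw [Fac, Finset.mem_insert]
  right
  rw [Finset.mem_sdiff]
  exact ⟨hx, by simp [hxα, hxβ]⟩

lemma Fac_sub_G {α β : Fin n} : Fac n k hn α β ⊆ Gset n k hn := by
  rw [Fac]
  intro x hx
  rcases Finset.mem_insert.1 hx with rfl | hx
  · exact u_mem_G hn
  · exact AB_sub_G hn (Finset.mem_sdiff.1 hx).1

lemma Fac_ksub_mem {α β : Fin n} (hα : α ∈ Aset n k hn) (hβ : β ∈ Bset n k hn) :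
    ∀ F ⊆ Fac n k hn α β, F.card = k → F ∈ SkS n k hn := by
  intro F hFX hFc
  rw [mem_SkS hn]
  refine ⟨hFX.trans (Fac_sub_G hn), hFc, ?_, ?_⟩
  · intro h
    exact A_mem_not_mem_Fac hn hα (hFX (h hα))
  · intro h
    exact B_mem_not_mem_Fac hn hβ (hFX (h hβ))

lemma sub_G_of_faces {X : Finset (Fin n)} (hk : 2 ≤ k) (hcard : k ≤ X.card)
    (h : ∀ F ⊆ X, F.card = k → F ∈ SkS n k hn) : X ⊆ Gset n k hn := by
  intro x hx
  obtain ⟨F, hxF, hFX, hFc⟩ := Finset.exists_subsuperset_card_eq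
    (Finset.singleton_subset_iff.2 hx)
    (by rw [Finset.card_singleton]; omega : ({x} : Finset (Fin n)).card ≤ k) hcard
  exact ((mem_SkS hn).1 (h F hFX hFc)).1 (hxF (Finset.mem_singleton_self x))

lemma notA_of_faces {X : Finset (Fin n)} (hk : 2 ≤ k) (hcard : k ≤ X.card)
    (h : ∀ F ⊆ X, F.card = k → F ∈ SkS n k hn) : ¬ Aset n k hn ⊆ X := by
  intro hAX
  obtain ⟨F, hAF, hFX, hFc⟩ := Finset.exists_subsuperset_card_eq hAX
    (by rw [card_A hn]; omega) hcard
  exact ((mem_SkS hn).1 (h F hFX hFc)).2.2.1 hAF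

lemma notB_of_faces {X : Finset (Fin n)} (hcard : k ≤ X.card)
    (h : ∀ F ⊆ X, F.card = k → F ∈ SkS n k hn) : ¬ Bset n k hn ⊆ X := by
  intro hBX
  obtain ⟨F, hBF, hFX, hFc⟩ := Finset.exists_subsuperset_card_eq hBX
    (by rw [card_B hn]) hcard
  exact ((mem_SkS hn).1 (h F hFX hFc)).2.2.2 hBF

lemma face_k1 {X : Finset (Fin n)} (hk : 2 ≤ k) (hX : X.card = k + 1)
    (h : ∀ F ⊆ X, F.card = k → F ∈ SkS n k hn) :
    ∃ α ∈ Aset n k hn, ∃ β ∈ Bset n k hn, X = Fac n k hn α β := by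
  classical
  have hXG : X ⊆ Gset n k hn := sub_G_of_faces hn hk (by omega) h
  have hXA : ¬ Aset n k hn ⊆ X := notA_of_faces hn hk (by omega) h
  have hXB : ¬ Bset n k hn ⊆ X := notB_of_faces hn (by omega) h
  have huX : uu n k hn ∈ X := by
    by_contra huX
    have hXAB : X ⊆ ABset n k hn := by
      rw [AB_eq_G_erase hn]; exact Finset.subset_erase.2 ⟨hXG, huX⟩
    have hD : (ABset n k hn \ X).card = 1 := by
      rw [Finset.card_sdiff_of_subset hXAB, card_AB hn, hX]; omega
    obtain ⟨a, haA, haX⟩ : ∃ a ∈ Aset n k hn, a ∉ X := by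
      by_contra hc; push_neg at hc; exact hXA hc
    obtain ⟨b, hbB, hbX⟩ : ∃ b ∈ Bset n k hn, b ∉ X := by
      by_contra hc; push_neg at hc; exact hXB hc
    have hab : a ≠ b := A_ne_B_elt hn haA hbB
    have hsub : ({a, b} : Finset (Fin n)) ⊆ ABset n k hn \ X := by
      intro x hx
      rcases Finset.mem_insert.1 hx with rfl | hx
      · exact Finset.mem_sdiff.2 ⟨A_sub_AB hn haA, haX⟩
      · rw [Finset.mem_singleton] at hx; subst hx
        exact Finset.mem_sdiff.2 ⟨B_sub_AB hn hbB, hbX⟩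
    have := Finset.card_le_card hsub
    rw [Finset.card_pair hab, hD] at this
    omega
  have hX' : X.erase (uu n k hn) ∈ SkS n k hn := by
    refine h _ (Finset.erase_subset _ _) ?_
    rw [Finset.card_erase_of_mem huX, hX]; omega
  obtain ⟨α, hα, β, hβ, hshape⟩ := shapeC hn hX' (Finset.notMem_erase _ _)
  refine ⟨α, hα, β, hβ, ?_⟩
  rw [Fac, ← hshape, Finset.insert_erase huX]

lemma no_big_face {X : Finset (Fin n)} (hk : 2 ≤ k) (hX : k + 2 ≤ X.card) :
    ¬ ∀ F ⊆ X, F.card = k → F ∈ SkS n k hn := by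
  intro h
  have hXG : X ⊆ Gset n k hn := sub_G_of_faces hn hk (by omega) h
  have hXA : ¬ Aset n k hn ⊆ X := notA_of_faces hn hk (by omega) h
  have hXB : ¬ Bset n k hn ⊆ X := notB_of_faces hn (by omega) h
  obtain ⟨a, haA, haX⟩ : ∃ a ∈ Aset n k hn, a ∉ X := by
    by_contra hc; push_neg at hc; exact hXA hc
  obtain ⟨b, hbB, hbX⟩ : ∃ b ∈ Bset n k hn, b ∉ X := by
    by_contra hc; push_neg at hc; exact hXB hc
  have hab : a ≠ b := A_ne_B_elt hn haA hbB
  have hsub : ({a, b} : Finset (Fin n)) ⊆ Gset n k hn \ X := by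
    intro x hx
    rcases Finset.mem_insert.1 hx with rfl | hx
    · exact Finset.mem_sdiff.2 ⟨AB_sub_G hn (A_sub_AB hn haA), haX⟩
    · rw [Finset.mem_singleton] at hx; subst hx
      exact Finset.mem_sdiff.2 ⟨AB_sub_G hn (B_sub_AB hn hbB), hbX⟩
  have h1 := Finset.card_le_card hsub
  have h2 : (Gset n k hn \ X).card = (Gset n k hn).card - X.card :=
    Finset.card_sdiff_of_subset hXG
  have h3 := Finset.card_le_card hXG
  rw [Finset.card_pair hab] at h1
  rw [card_G hn] at h2 h3
  omega

lemma Fac_isFacet {α β : Fin n} (hk : 2 ≤ k) (hα : α ∈ Aset n k hn)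
    (hβ : β ∈ Bset n k hn) : IsFacet k (SkS n k hn) (Fac n k hn α β) := by
  constructor
  · exact Or.inr (Fac_ksub_mem hn hα hβ)
  · intro Y hY hsub
    by_contra hne
    have hss : Fac n k hn α β ⊂ Y := Finset.ssubset_iff_subset_ne.2 ⟨hsub, hne⟩
    have hcard : k + 2 ≤ Y.card := by
      have := Finset.card_lt_card hss
      rw [Fac_card hn hα hβ] at this
      omega
    rcases hY with hY | hY
    · omega
    · exact no_big_face hn hk hcard hY

lemma Sk_mem_sub_Fac {F : Finset (Fin n)} (hF : F ∈ SkS n k hn) :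
    ∃ α ∈ Aset n k hn, ∃ β ∈ Bset n k hn, F ⊆ Fac n k hn α β := by
  obtain ⟨hFG, hFc, hFA, hFB⟩ := (mem_SkS hn).1 hF
  obtain ⟨α, hαA, hαF⟩ : ∃ a ∈ Aset n k hn, a ∉ F := by
    by_contra hc; push_neg at hc; exact hFA hc
  obtain ⟨β, hβB, hβF⟩ : ∃ b ∈ Bset n k hn, b ∉ F := by
    by_contra hc; push_neg at hc; exact hFB hc
  refine ⟨α, hαA, β, hβB, fun x hx => ?_⟩
  by_cases hxu : x = uu n k hn
  · rw [Fac, hxu]; exact Finset.mem_insert_self _ _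
  · have hxAB : x ∈ ABset n k hn := by
      rw [AB_eq_G_erase hn]
      exact Finset.mem_erase.2 ⟨hxu, hFG hx⟩
    exact mem_Fac_of_AB hn hxAB (fun hc => hαF (hc ▸ hx)) (fun hc => hβF (hc ▸ hx))

lemma facet_classify {V X : Finset (Fin n)} (hk : 2 ≤ k) (hV : V.card = k - 1)
    (hX : IsFacet k (SkS n k hn) X) (hVX : V ⊂ X) :
    ∃ α ∈ Aset n k hn, ∃ β ∈ Bset n k hn, X = Fac n k hn α β := by
  have hXk : k ≤ X.card := by
    have := Finset.card_lt_card hVX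
    omega
  have hface : ∀ F ⊆ X, F.card = k → F ∈ SkS n k hn := by
    rcases hX.1 with h | h
    · omega
    · exact h
  rcases Nat.lt_or_ge X.card (k + 1) with hc | hc
  · -- X.card = k, so X ∈ Sk, contradicting maximality
    exfalso
    have hXc : X.card = k := by omega
    have hXSk : X ∈ SkS n k hn := hface X Finset.Subset.rfl hXc
    obtain ⟨α, hα, β, hβ, hsub⟩ := Sk_mem_sub_Fac hn hXSk
    have := hX.2 _ (Or.inr (Fac_ksub_mem hn hα hβ)) hsub
    rw [this, Fac_card hn hα hβ] at hXc
    omega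
  rcases Nat.lt_or_ge X.card (k + 2) with hc2 | hc2
  · exact face_k1 hn hk (by omega) hface
  · exact absurd hface (no_big_face hn hk hc2)

lemma exists_other_A {α : Fin n} (hα : α ∈ Aset n k hn) :
    ∃ α' ∈ Aset n k hn, α' ≠ α := by
  have h2 : 1 < (Aset n k hn).card := by rw [card_A hn]; omega
  obtain ⟨a, ha, b, hb, hab⟩ := Finset.one_lt_card.1 h2
  by_cases haα : a = α
  · exact ⟨b, hb, fun hc => hab (by rw [hc, haα])⟩
  · exact ⟨a, ha, haα⟩

lemma exists_other_B {β : Fin n} (hk : 2 ≤ k) (hβ : β ∈ Bset n k hn) {V : Finset (Fin n)}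
    (hVcard : V.card = k - 1) {α' : Fin n} (hα' : α' ∈ Aset n k hn) (hα'V : α' ∈ V) :
    ∃ b ∈ Bset n k hn, b ≠ β ∧ b ∉ V := by
  classical
  by_contra hc
  push_neg at hc
  have hsub : (Bset n k hn).erase β ⊆ V.erase α' := by
    intro b hb
    have hbB := (Finset.mem_erase.1 hb).2
    have hbβ := (Finset.mem_erase.1 hb).1
    refine Finset.mem_erase.2 ⟨?_, hc b hbB hbβ⟩
    intro hcc
    exact A_disj_B hn hα' (hcc ▸ hbB)
  have h1 := Finset.card_le_card hsub
  rw [Finset.card_erase_of_mem hβ, Finset.card_erase_of_mem hα'V, card_B hn, hVcard] at h1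
  omega

lemma not_simplicial {V : Finset (Fin n)} (hk : 2 ≤ k) (hV : V.card = k - 1) :
    ¬ SimplicialFace k (SkS n k hn) V := by
  rintro ⟨X, ⟨hXfacet, hVX⟩, huniq⟩
  obtain ⟨α, hα, β, hβ, rfl⟩ := facet_classify hn hk hV hXfacet hVX
  obtain ⟨α', hα'A, hα'α⟩ := exists_other_A hn hα
  have hVsub := hVX.1
  by_cases hα'V : α' ∈ V
  · -- find b ∈ B, b ≠ β, b ∉ V; use Fac α b
    obtain ⟨b, hbB, hbβ, hbV⟩ := exists_other_B hn hk hβ hV hα'A hα'V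
    have hVsub' : V ⊆ Fac n k hn α b := by
      intro v hv
      have hvX := hVsub hv
      rw [Fac, Finset.mem_insert] at hvX
      rcases hvX with rfl | hvX
      · exact Finset.mem_insert_self _ _
      · rw [Finset.mem_sdiff] at hvX
        refine mem_Fac_of_AB hn hvX.1 ?_ (fun hc => hbV (hc ▸ hv))
        intro hc
        exact hvX.2 (by simp [hc])
    have hne : Fac n k hn α b ≠ Fac n k hn α β := by
      intro hc
      have hβmem : β ∈ Fac n k hn α b :=
        mem_Fac_of_AB hn (B_sub_AB hn hβ) (A_ne_B_elt hn hα hβ).symm (Ne.symm hbβ)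
      rw [hc] at hβmem
      exact B_mem_not_mem_Fac hn hβ hβmem
    have := huniq (Fac n k hn α b)
      ⟨Fac_isFacet hn hk hα hbB, Finset.ssubset_iff_subset_ne.2 ⟨hVsub', ?_⟩⟩
    · exact hne this
    · intro hc
      have : (Fac n k hn α b).card = k - 1 := by rw [← hc, hV]
      rw [Fac_card hn hα hbB] at this
      omega
  · -- use Fac α' β
    have hVsub' : V ⊆ Fac n k hn α' β := by
      intro v hv
      have hvX := hVsub hv
      rw [Fac, Finset.mem_insert] at hvX
      rcases hvX with rfl | hvX
      · exact Finset.mem_insert_self _ _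
      · rw [Finset.mem_sdiff] at hvX
        refine mem_Fac_of_AB hn hvX.1 (fun hc => hα'V (hc ▸ hv)) ?_
        intro hc
        exact hvX.2 (by simp [hc])
    have hne : Fac n k hn α' β ≠ Fac n k hn α β := by
      intro hc
      have hαmem : α ∈ Fac n k hn α' β :=
        mem_Fac_of_AB hn (A_sub_AB hn hα) (Ne.symm hα'α) (A_ne_B_elt hn hα hβ)
      rw [hc] at hαmem
      exact A_mem_not_mem_Fac hn hα hαmem
    have := huniq (Fac n k hn α' β)
      ⟨Fac_isFacet hn hk hα'A hβ, Finset.ssubset_iff_subset_ne.2 ⟨hVsub', ?_⟩⟩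
    · exact hne this
    · intro hc
      have : (Fac n k hn α' β).card = k - 1 := by rw [← hc, hV]
      rw [Fac_card hn hα'A hβ] at this
      omega

end Faces

end St12


namespace St12

section Linear

open Finset

variable {𝔽 : Type*} [Field 𝔽] [CharP 𝔽 2] {n k : ℕ}

lemma char2_cancel {a b : 𝔽} (h : a + b = 0) : a = b := by
  have h1 : a = -b := eq_neg_of_add_eq_zero_left h
  rwa [CharTwo.neg_eq] at h1

lemma nat_cast_even {m : ℕ} (hm : Even m) : ((m : ℕ) : 𝔽) = 0 := by
  obtain ⟨t, rfl⟩ := hm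
  push_cast
  exact CharTwo.add_self_eq_zero _

lemma bdryMap_apply (Sk : Finset (Finset (Fin n))) (v : ↥Sk → 𝔽) (τ : Csets n (k - 1)) :
    bdryMap 𝔽 n k Sk v τ = ∑ F : ↥Sk, ((inc τ.1 F.1 : ℤ) : 𝔽) * v F := by
  simp [bdryMap, Matrix.mulVecLin_apply, Matrix.mulVec, dotProduct, Matrix.of_apply]

lemma subset_sdiff_pair {τ : Finset (Fin n)} {S : Finset (Fin n)} {α β : Fin n} :
    τ ⊆ S \ {α, β} ↔ τ ⊆ S ∧ α ∉ τ ∧ β ∉ τ := by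
  classical
  rw [Finset.subset_sdiff, Finset.disjoint_insert_right, Finset.disjoint_singleton_right]

variable (hk : 2 ≤ k) (hn : k + 3 ≤ n)

/-- `∂∂ = 0` on `(k+1)`-faces. -/
lemma bdry_pbdry (hk : 2 ≤ k) {X : Finset (Fin n)} (hX : X.card = k + 1)
    (hXf : ∀ F ⊆ X, F.card = k → F ∈ SkS n k hn) :
    bdryMap 𝔽 n k (SkS n k hn) (pbdry 𝔽 (SkS n k hn) X) = 0 := by
  classical
  funext τ
  rw [bdryMap_apply, Pi.zero_apply]
  have hstep : ∀ F : ↥(SkS n k hn),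
      ((inc τ.1 F.1 : ℤ) : 𝔽) * pbdry 𝔽 (SkS n k hn) X F
        = if τ.1 ⊆ F.1 ∧ F.1 ⊆ X then (1 : 𝔽) else 0 := by
    intro F
    have hFc : F.1.card = k := card_of_mem_SkS hn F.2
    have h1 : ((inc τ.1 F.1 : ℤ) : 𝔽) = if τ.1 ⊆ F.1 then 1 else 0 :=
      inc_cast_subset 𝔽 (by rw [τ.2, hFc]; omega)
    have h2 : pbdry 𝔽 (SkS n k hn) X F = if F.1 ⊆ X then (1 : 𝔽) else 0 :=
      inc_cast_subset 𝔽 (by rw [hFc, hX])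
    rw [h1, h2]
    by_cases hτF : τ.1 ⊆ F.1 <;> by_cases hFX : F.1 ⊆ X <;>
      simp [hτF, hFX]
  rw [Finset.sum_congr rfl (fun F _ => hstep F)]
  rw [Finset.univ_eq_attach]
  rw [Finset.sum_attach (SkS n k hn) (fun F => if τ.1 ⊆ F ∧ F ⊆ X then (1:𝔽) else 0)]
  rw [Finset.sum_boole]
  by_cases hτX : τ.1 ⊆ X
  · have hfil : (SkS n k hn).filter (fun F => τ.1 ⊆ F ∧ F ⊆ X)
        = (X \ τ.1).image (fun y => insert y τ.1) := by
      ext F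
      simp only [Finset.mem_filter, Finset.mem_image, Finset.mem_sdiff]
      constructor
      · rintro ⟨hFSk, hτF, hFX⟩
        have hFc : F.card = k := card_of_mem_SkS hn hFSk
        have hsd : (F \ τ.1).card = 1 := by
          rw [Finset.card_sdiff_of_subset hτF, hFc, τ.2]; omega
        obtain ⟨y, hy⟩ := Finset.card_eq_one.1 hsd
        have hymem : y ∈ F \ τ.1 := hy ▸ Finset.mem_singleton_self y
        refine ⟨y, ⟨hFX (Finset.mem_sdiff.1 hymem).1, (Finset.mem_sdiff.1 hymem).2⟩, ?_⟩
        have hun : τ.1 ∪ F \ τ.1 = F := Finset.union_sdiff_of_subset hτF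
        rw [← hun, hy, Finset.union_comm]
        exact Finset.insert_eq _ _
      · rintro ⟨y, ⟨hyX, hyτ⟩, rfl⟩
        have hcard : (insert y τ.1).card = k := by
          rw [Finset.card_insert_of_notMem hyτ, τ.2]; omega
        exact ⟨hXf _ (Finset.insert_subset hyX hτX) hcard,
          Finset.subset_insert _ _, Finset.insert_subset hyX hτX⟩
    rw [hfil, Finset.card_image_of_injOn, Finset.card_sdiff_of_subset hτX, hX, τ.2]
    · have h2 : k + 1 - (k - 1) = 2 := by omega
      rw [h2]
      exact nat_cast_even (by decide)
    · intro y hy y' hy' hEq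
      have hEq' : insert y τ.1 = insert y' τ.1 := hEq
      have : y ∈ insert y' τ.1 := by
        rw [← hEq']; exact Finset.mem_insert_self y τ.1
      rcases Finset.mem_insert.1 this with h | h
      · exact h
      · exact absurd h (Finset.mem_sdiff.1 hy).2
  · have hfil : (SkS n k hn).filter (fun F => τ.1 ⊆ F ∧ F ⊆ X) = ∅ := by
      rw [Finset.filter_eq_empty_iff]
      rintro F _ ⟨h1, h2⟩
      exact hτX (h1.trans h2)
    rw [hfil]
    simp

/-- Every kernel element is the "cone" combination of boundaries of `(k+1)`-faces. -/
lemma ker_rep (hk : 2 ≤ k) (z : ↥(SkS n k hn) → 𝔽)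
    (hz : bdryMap 𝔽 n k (SkS n k hn) z = 0) :
    z = ∑ F ∈ (SkS n k hn).attach.filter (fun F => uu n k hn ∉ F.1),
      z F • pbdry 𝔽 (SkS n k hn) (insert (uu n k hn) F.1) := by
  classical
  funext G
  rw [Finset.sum_apply]
  have hstep : ∀ F ∈ (SkS n k hn).attach.filter (fun F => uu n k hn ∉ F.1),
      (z F • pbdry 𝔽 (SkS n k hn) (insert (uu n k hn) F.1)) G
        = if G.1.erase (uu n k hn) ⊆ F.1 then z F else 0 := by
    intro F hF
    have huF : uu n k hn ∉ F.1 := (Finset.mem_filter.1 hF).2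
    have hFc : F.1.card = k := card_of_mem_SkS hn F.2
    have hGc : G.1.card = k := card_of_mem_SkS hn G.2
    have hcard : (insert (uu n k hn) F.1).card = k + 1 := by
      rw [Finset.card_insert_of_notMem huF, hFc]
    rw [Pi.smul_apply, smul_eq_mul, pbdry,
      inc_cast_subset 𝔽 (by rw [hGc, hcard]), mul_ite, mul_one, mul_zero]
    exact if_congr Finset.subset_insert_iff rfl rfl
  rw [Finset.sum_congr rfl hstep]
  by_cases huG : uu n k hn ∈ G.1
  · -- use the cycle condition at `τ = G \ {u}`
    have hGc : G.1.card = k := card_of_mem_SkS hn G.2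
    have hτc : (G.1.erase (uu n k hn)).card = k - 1 := by
      rw [Finset.card_erase_of_mem huG, hGc]
    set τ : Finset (Fin n) := G.1.erase (uu n k hn) with hτ
    have h0 : ∑ F : ↥(SkS n k hn), ((inc τ F.1 : ℤ) : 𝔽) * z F = 0 := by
      have h := congrFun hz (⟨τ, hτc⟩ : Csets n (k - 1))
      rwa [bdryMap_apply, Pi.zero_apply] at h
    have hterm : ∀ F : ↥(SkS n k hn),
        ((inc τ F.1 : ℤ) : 𝔽) * z F = if τ ⊆ F.1 then z F else 0 := by
      intro F
      rw [inc_cast_subset 𝔽 (by rw [hτc, card_of_mem_SkS hn F.2]; omega),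
        ite_mul, one_mul, zero_mul]
    rw [Finset.univ_eq_attach,
      Finset.sum_congr rfl (fun F _ => hterm F)] at h0
    rw [← Finset.sum_filter_add_sum_filter_not ((SkS n k hn).attach)
      (fun F => uu n k hn ∉ F.1) (fun F => if τ ⊆ F.1 then z F else 0)] at h0
    have h2 : ∑ F ∈ (SkS n k hn).attach.filter (fun F => ¬ uu n k hn ∉ F.1),
        (if τ ⊆ F.1 then z F else 0) = z G := by
      rw [Finset.sum_eq_single_of_mem G]
      · rw [if_pos (Finset.erase_subset _ _)]
      · exact Finset.mem_filter.2 ⟨Finset.mem_attach _ _, not_not_intro huG⟩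
      · intro F hF hFG
        rw [if_neg]
        intro hsub
        have huF : uu n k hn ∈ F.1 := not_not.1 (Finset.mem_filter.1 hF).2
        have hGF : G.1 ⊆ F.1 := by
          have hins : G.1 = insert (uu n k hn) τ := (Finset.insert_erase huG).symm
          rw [hins]
          exact Finset.insert_subset huF hsub
        have hGFeq : G.1 = F.1 := Finset.eq_of_subset_of_card_le hGF
          (by rw [card_of_mem_SkS hn F.2, card_of_mem_SkS hn G.2])
        exact hFG (Subtype.ext hGFeq.symm)
    rw [h2] at h0
    exact (char2_cancel h0).symm
  · -- the only contribution is `F = G`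
    rw [Finset.sum_eq_single_of_mem G]
    · rw [if_pos]
      exact (Finset.erase_subset _ _)
    · exact Finset.mem_filter.2 ⟨Finset.mem_attach _ _, huG⟩
    · intro F hF hFG
      rw [if_neg]
      intro hsub
      have hGF : G.1 ⊆ F.1 := by
        rw [Finset.erase_eq_of_notMem huG] at hsub
        exact hsub
      have : G.1 = F.1 := Finset.eq_of_subset_of_card_le hGF
        (by rw [card_of_mem_SkS hn F.2, card_of_mem_SkS hn G.2])
      exact hFG (Subtype.ext this.symm)

end Linear

end St12


namespace St12

section Circuit

open Finset

variable {𝔽 : Type*} [Field 𝔽] [CharP 𝔽 2] {n k : ℕ}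

lemma CC_inj (hn : k + 3 ≤ n) :
    ∀ p ∈ (Aset n k hn) ×ˢ (Bset n k hn), ∀ q ∈ (Aset n k hn) ×ˢ (Bset n k hn),
      ABset n k hn \ {p.1, p.2} = ABset n k hn \ {q.1, q.2} → p = q := by
  rintro ⟨α, β⟩ hp ⟨α', β'⟩ hq hEq
  obtain ⟨hα, hβ⟩ := Finset.mem_product.1 hp
  obtain ⟨hα', hβ'⟩ := Finset.mem_product.1 hq
  obtain ⟨h1, h2⟩ := shape_inj hn hα hβ hα' hβ' hEq
  simp only [Prod.mk.injEq]
  exact ⟨h1, h2⟩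

lemma CC_nonempty (hk : 2 ≤ k) (hn : k + 3 ≤ n) : (CC n k hn).Nonempty := by
  have h1 : (1 : ℕ) < n := by omega
  have h3 : (3 : ℕ) < n := by omega
  refine ⟨ABset n k hn \ {⟨1, h1⟩, ⟨3, h3⟩}, shape_mem hn ?_ ?_⟩
  · simp [Aset, mem_iv]
  · simp [Bset, mem_iv]
    omega

lemma sum_inc_CC_zero (hk : 2 ≤ k) (hn : k + 3 ≤ n) (τ : Csets n (k - 1)) :
    ∑ F ∈ CC n k hn, ((inc τ.1 F : ℤ) : 𝔽) = 0 := by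
  classical
  rw [CC_eq_image hn, Finset.sum_image (CC_inj hn)]
  have hterm : ∀ p ∈ (Aset n k hn) ×ˢ (Bset n k hn),
      ((inc τ.1 (ABset n k hn \ {p.1, p.2}) : ℤ) : 𝔽)
        = if τ.1 ⊆ ABset n k hn \ {p.1, p.2} then 1 else 0 := by
    intro p hp
    obtain ⟨hp1, hp2⟩ := Finset.mem_product.1 hp
    exact inc_cast_subset 𝔽 (by rw [τ.2, card_AB_sdiff_pair hn hp1 hp2]; omega)
  rw [Finset.sum_congr rfl hterm]
  by_cases hτAB : τ.1 ⊆ ABset n k hn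
  · have hterm2 : ∀ p ∈ (Aset n k hn) ×ˢ (Bset n k hn),
        (if τ.1 ⊆ ABset n k hn \ {p.1, p.2} then (1:𝔽) else 0)
          = (if p.1 ∉ τ.1 then 1 else 0) * (if p.2 ∉ τ.1 then 1 else 0) := by
      intro p _
      by_cases h1 : p.1 ∉ τ.1 <;> by_cases h2 : p.2 ∉ τ.1 <;>
        simp [subset_sdiff_pair, h1, h2, hτAB]
    rw [Finset.sum_congr rfl hterm2]
    have hps : (∑ x ∈ (Aset n k hn) ×ˢ (Bset n k hn),
          (if x.1 ∉ τ.1 then (1:𝔽) else 0) * if x.2 ∉ τ.1 then 1 else 0)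
        = (∑ a ∈ Aset n k hn, if a ∉ τ.1 then (1:𝔽) else 0)
            * (∑ b ∈ Bset n k hn, if b ∉ τ.1 then (1:𝔽) else 0) := by
      rw [Finset.sum_mul_sum, Finset.sum_product]
    rw [hps, Finset.sum_boole, Finset.sum_boole]
    have hAf : (Aset n k hn).filter (fun x => x ∉ τ.1) = Aset n k hn \ τ.1 :=
      (Finset.sdiff_eq_filter _ _).symm
    have hBf : (Bset n k hn).filter (fun x => x ∉ τ.1) = Bset n k hn \ τ.1 :=
      (Finset.sdiff_eq_filter _ _).symm
    rw [hAf, hBf]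
    set x := (Aset n k hn \ τ.1).card with hx
    set y := (Bset n k hn \ τ.1).card with hy
    have hxy : x + y = 3 := by
      have hdisj : Disjoint (Aset n k hn \ τ.1) (Bset n k hn \ τ.1) := by
        rw [Finset.disjoint_left]
        intro a ha hb
        exact A_disj_B hn (Finset.mem_sdiff.1 ha).1 (Finset.mem_sdiff.1 hb).1
      have hun : (Aset n k hn \ τ.1) ∪ (Bset n k hn \ τ.1) = ABset n k hn \ τ.1 := by
        rw [← Finset.union_sdiff_distrib, A_union_B hn]
      have := Finset.card_union_of_disjoint hdisj
      rw [hun, Finset.card_sdiff_of_subset hτAB, card_AB hn, τ.2] at this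
      omega
    have heven : Even (x * y) := by
      rcases Nat.even_or_odd x with hex | hox
      · exact Nat.even_mul.2 (Or.inl hex)
      · refine Nat.even_mul.2 (Or.inr ?_)
        rw [Nat.odd_iff] at hox
        rw [Nat.even_iff]
        omega
    rw [← Nat.cast_mul]
    exact nat_cast_even heven
  · refine Finset.sum_eq_zero fun p hp => ?_
    rw [if_neg]
    intro hsub
    exact hτAB (hsub.trans Finset.sdiff_subset)

lemma CC_dependent (hk : 2 ≤ k) (hn : k + 3 ≤ n) :
    ¬ LinearIndependent 𝔽 (fun F : ↥(CC n k hn) => bvec 𝔽 n k F.1) := by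
  classical
  rw [Fintype.not_linearIndependent_iff]
  refine ⟨fun _ => 1, ?_, ?_⟩
  · funext τ
    rw [Finset.sum_apply, Pi.zero_apply]
    have : ∀ F ∈ (CC n k hn).attach,
        ((1:𝔽) • bvec 𝔽 n k F.1) τ = ((inc τ.1 F.1 : ℤ) : 𝔽) := by
      intro F _
      rw [Pi.smul_apply, one_smul]
      rfl
    rw [Finset.univ_eq_attach, Finset.sum_congr rfl this,
      Finset.sum_attach (CC n k hn) (fun F => ((inc τ.1 F : ℤ) : 𝔽))]
    exact sum_inc_CC_zero hk hn τ
  · obtain ⟨F, hF⟩ := CC_nonempty hk hn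
    exact ⟨⟨F, hF⟩, one_ne_zero⟩

end Circuit

end St12


namespace St12

section Min

open Finset

variable {𝔽 : Type*} [Field 𝔽] [CharP 𝔽 2] {n k : ℕ}

lemma not_mem_sdiff_of_mem {S T : Finset (Fin n)} {x : Fin n} (hx : x ∈ S) (hxT : x ∈ T) :
    x ∉ S \ T := fun h => (Finset.mem_sdiff.1 h).2 hxT

lemma CC_min (hk : 2 ≤ k) (hn : k + 3 ≤ n) {C' : Finset (Finset (Fin n))}
    (hC' : C' ⊂ CC n k hn) :
    LinearIndependent 𝔽 (fun F : ↥C' => bvec 𝔽 n k F.1) := by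
  classical
  by_contra hLI
  obtain ⟨g, hg0, F₀, hgF₀⟩ := Fintype.not_linearIndependent_iff.1 hLI
  set c : Finset (Fin n) → 𝔽 := fun F => if h : F ∈ C' then g ⟨F, h⟩ else 0 with hc
  have hrel : ∀ τ : Finset (Fin n), τ.card = k - 1 →
      ∑ p ∈ (Aset n k hn) ×ˢ (Bset n k hn),
        c (ABset n k hn \ {p.1, p.2}) *
          (if τ ⊆ ABset n k hn \ {p.1, p.2} then (1:𝔽) else 0) = 0 := by
    intro τ hτ
    have h1 : ∑ F ∈ C', c F * ((inc τ F : ℤ) : 𝔽) = 0 := by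
      have h2 := congrFun hg0 (⟨τ, hτ⟩ : Csets n (k - 1))
      rw [Finset.sum_apply, Pi.zero_apply] at h2
      rw [← h2, Finset.univ_eq_attach,
        ← Finset.sum_attach C' (fun F => c F * ((inc τ F : ℤ) : 𝔽))]
      refine Finset.sum_congr rfl fun F _ => ?_
      rw [Pi.smul_apply, smul_eq_mul]
      simp only [hc]
      rw [dif_pos F.2]
      rfl
    have h3 : ∑ F ∈ CC n k hn, c F * ((inc τ F : ℤ) : 𝔽) = 0 := by
      rw [← Finset.sum_subset hC'.1
        (fun F _ hFC' => by simp only [hc]; rw [dif_neg hFC', zero_mul])]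
      exact h1
    rw [CC_eq_image hn, Finset.sum_image (CC_inj hn)] at h3
    have h4 : ∀ p ∈ (Aset n k hn) ×ˢ (Bset n k hn),
        c (ABset n k hn \ {p.1, p.2}) *
            (if τ ⊆ ABset n k hn \ {p.1, p.2} then (1:𝔽) else 0)
          = c (ABset n k hn \ {p.1, p.2}) *
              ((inc τ (ABset n k hn \ {p.1, p.2}) : ℤ) : 𝔽) := by
      intro p hp
      obtain ⟨hp1, hp2⟩ := Finset.mem_product.1 hp
      rw [inc_cast_subset 𝔽 (by rw [hτ, card_AB_sdiff_pair hn hp1 hp2]; omega)]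
    rw [Finset.sum_congr rfl h4]
    exact h3
  -- two exchange steps
  have stepB : ∀ α ∈ Aset n k hn, ∀ β ∈ Bset n k hn, ∀ β' ∈ Bset n k hn, β ≠ β' →
      c (ABset n k hn \ {α, β}) = c (ABset n k hn \ {α, β'}) := by
    intro α hα β hβ β' hβ' hββ'
    have hαβ : α ≠ β := A_ne_B_elt hn hα hβ
    have hαβ' : α ≠ β' := A_ne_B_elt hn hα hβ'
    have hsub3 : ({α, β, β'} : Finset (Fin n)) ⊆ ABset n k hn := by
      intro x hx
      rcases Finset.mem_insert.1 hx with rfl | hx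
      · exact A_sub_AB hn hα
      rcases Finset.mem_insert.1 hx with rfl | hx
      · exact B_sub_AB hn hβ
      rw [Finset.mem_singleton] at hx; subst hx
      exact B_sub_AB hn hβ'
    have hcard3 : ({α, β, β'} : Finset (Fin n)).card = 3 := by
      rw [Finset.card_insert_of_notMem (by simp [hαβ, hαβ']),
        Finset.card_insert_of_notMem (by simp [hββ']), Finset.card_singleton]
    have hτc : (ABset n k hn \ {α, β, β'}).card = k - 1 := by
      rw [Finset.card_sdiff_of_subset hsub3, card_AB hn, hcard3]
      omega
    have h := hrel _ hτc
    have hterm : ∀ p ∈ (Aset n k hn) ×ˢ (Bset n k hn),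
        c (ABset n k hn \ {p.1, p.2}) *
          (if ABset n k hn \ {α, β, β'} ⊆ ABset n k hn \ {p.1, p.2} then (1:𝔽) else 0)
        = if p = (α, β) ∨ p = (α, β') then c (ABset n k hn \ {p.1, p.2}) else 0 := by
      intro p hp
      obtain ⟨hp1, hp2⟩ := Finset.mem_product.1 hp
      rw [mul_ite, mul_one, mul_zero]
      refine if_congr ?_ rfl rfl
      rw [subset_sdiff_pair]
      constructor
      · rintro ⟨-, h1, h2⟩
        have hp1' : p.1 ∈ ({α, β, β'} : Finset (Fin n)) := by
          by_contra hcc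
          exact h1 (Finset.mem_sdiff.2 ⟨A_sub_AB hn hp1, hcc⟩)
        have hp2' : p.2 ∈ ({α, β, β'} : Finset (Fin n)) := by
          by_contra hcc
          exact h2 (Finset.mem_sdiff.2 ⟨B_sub_AB hn hp2, hcc⟩)
        have hp1α : p.1 = α := by
          rcases Finset.mem_insert.1 hp1' with h' | h'
          · exact h'
          rcases Finset.mem_insert.1 h' with h'' | h''
          · exact absurd (h'' ▸ hβ) (A_disj_B hn hp1)
          · rw [Finset.mem_singleton] at h''
            exact absurd (h'' ▸ hβ') (A_disj_B hn hp1)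
        rcases Finset.mem_insert.1 hp2' with h' | h'
        · exact absurd (h' ▸ hp2) (fun hcc => A_disj_B hn hα hcc)
        rcases Finset.mem_insert.1 h' with h'' | h''
        · left; rw [← hp1α, ← h'']
        · rw [Finset.mem_singleton] at h''
          right; rw [← hp1α, ← h'']
      · rintro (rfl | rfl) <;>
          exact ⟨Finset.sdiff_subset, not_mem_sdiff_of_mem (A_sub_AB hn hα) (by simp),
            not_mem_sdiff_of_mem (B_sub_AB hn (by assumption)) (by simp)⟩
    rw [Finset.sum_congr rfl hterm, ← Finset.sum_filter] at h
    have hfil : ((Aset n k hn) ×ˢ (Bset n k hn)).filter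
        (fun p => p = (α, β) ∨ p = (α, β')) = {(α, β), (α, β')} := by
      ext p
      simp only [Finset.mem_filter, Finset.mem_insert, Finset.mem_singleton]
      constructor
      · exact fun h' => h'.2
      · rintro (rfl | rfl)
        · exact ⟨Finset.mem_product.2 ⟨hα, hβ⟩, Or.inl rfl⟩
        · exact ⟨Finset.mem_product.2 ⟨hα, hβ'⟩, Or.inr rfl⟩
    rw [hfil, Finset.sum_pair (by simp [hββ'])] at h
    exact char2_cancel h
  have stepA : ∀ α ∈ Aset n k hn, ∀ α' ∈ Aset n k hn, ∀ β ∈ Bset n k hn, α ≠ α' →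
      c (ABset n k hn \ {α, β}) = c (ABset n k hn \ {α', β}) := by
    intro α hα α' hα' β hβ hαα'
    have hαβ : α ≠ β := A_ne_B_elt hn hα hβ
    have hα'β : α' ≠ β := A_ne_B_elt hn hα' hβ
    have hsub3 : ({α, α', β} : Finset (Fin n)) ⊆ ABset n k hn := by
      intro x hx
      rcases Finset.mem_insert.1 hx with rfl | hx
      · exact A_sub_AB hn hα
      rcases Finset.mem_insert.1 hx with rfl | hx
      · exact A_sub_AB hn hα'
      rw [Finset.mem_singleton] at hx; subst hx
      exact B_sub_AB hn hβ
    have hcard3 : ({α, α', β} : Finset (Fin n)).card = 3 := by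
      rw [Finset.card_insert_of_notMem (by simp [hαα', hαβ]),
        Finset.card_insert_of_notMem (by simp [hα'β]), Finset.card_singleton]
    have hτc : (ABset n k hn \ {α, α', β}).card = k - 1 := by
      rw [Finset.card_sdiff_of_subset hsub3, card_AB hn, hcard3]
      omega
    have h := hrel _ hτc
    have hterm : ∀ p ∈ (Aset n k hn) ×ˢ (Bset n k hn),
        c (ABset n k hn \ {p.1, p.2}) *
          (if ABset n k hn \ {α, α', β} ⊆ ABset n k hn \ {p.1, p.2} then (1:𝔽) else 0)
        = if p = (α, β) ∨ p = (α', β) then c (ABset n k hn \ {p.1, p.2}) else 0 := by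
      intro p hp
      obtain ⟨hp1, hp2⟩ := Finset.mem_product.1 hp
      rw [mul_ite, mul_one, mul_zero]
      refine if_congr ?_ rfl rfl
      rw [subset_sdiff_pair]
      constructor
      · rintro ⟨-, h1, h2⟩
        have hp1' : p.1 ∈ ({α, α', β} : Finset (Fin n)) := by
          by_contra hcc
          exact h1 (Finset.mem_sdiff.2 ⟨A_sub_AB hn hp1, hcc⟩)
        have hp2' : p.2 ∈ ({α, α', β} : Finset (Fin n)) := by
          by_contra hcc
          exact h2 (Finset.mem_sdiff.2 ⟨B_sub_AB hn hp2, hcc⟩)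
        have hp2β : p.2 = β := by
          rcases Finset.mem_insert.1 hp2' with h' | h'
          · exact absurd (h' ▸ hp2) (fun hcc => A_disj_B hn hα hcc)
          rcases Finset.mem_insert.1 h' with h'' | h''
          · exact absurd (h'' ▸ hp2) (fun hcc => A_disj_B hn hα' hcc)
          · exact Finset.mem_singleton.1 h''
        rcases Finset.mem_insert.1 hp1' with h' | h'
        · left; rw [← h', ← hp2β]
        rcases Finset.mem_insert.1 h' with h'' | h''
        · right; rw [← h'', ← hp2β]
        · rw [Finset.mem_singleton] at h''
          exact absurd (h'' ▸ hβ) (A_disj_B hn hp1)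
      · rintro (rfl | rfl) <;>
          exact ⟨Finset.sdiff_subset, not_mem_sdiff_of_mem (A_sub_AB hn (by assumption)) (by simp),
            not_mem_sdiff_of_mem (B_sub_AB hn hβ) (by simp)⟩
    rw [Finset.sum_congr rfl hterm, ← Finset.sum_filter] at h
    have hfil : ((Aset n k hn) ×ˢ (Bset n k hn)).filter
        (fun p => p = (α, β) ∨ p = (α', β)) = {(α, β), (α', β)} := by
      ext p
      simp only [Finset.mem_filter, Finset.mem_insert, Finset.mem_singleton]
      constructor
      · exact fun h' => h'.2
      · rintro (rfl | rfl)
        · exact ⟨Finset.mem_product.2 ⟨hα, hβ⟩, Or.inl rfl⟩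
        · exact ⟨Finset.mem_product.2 ⟨hα', hβ⟩, Or.inr rfl⟩
    rw [hfil, Finset.sum_pair (by simp [hαα'])] at h
    exact char2_cancel h
  -- conclude
  obtain ⟨F₁, hF₁CC, hF₁C'⟩ := Finset.exists_of_ssubset hC'
  obtain ⟨α₁, hα₁, β₁, hβ₁, hF₁s⟩ :=
    shapeC hn ((mem_CC hn).1 hF₁CC).1 ((mem_CC hn).1 hF₁CC).2
  have hF₀CC : F₀.1 ∈ CC n k hn := hC'.1 F₀.2
  obtain ⟨α₀, hα₀, β₀, hβ₀, hF₀s⟩ :=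
    shapeC hn ((mem_CC hn).1 hF₀CC).1 ((mem_CC hn).1 hF₀CC).2
  have e0 : c F₀.1 = g F₀ := by
    simp only [hc]
    rw [dif_pos F₀.2]
  have e1 : c (ABset n k hn \ {α₀, β₀}) = c (ABset n k hn \ {α₀, β₁}) := by
    by_cases hββ : β₀ = β₁
    · rw [hββ]
    · exact stepB α₀ hα₀ β₀ hβ₀ β₁ hβ₁ hββ
  have e2 : c (ABset n k hn \ {α₀, β₁}) = c (ABset n k hn \ {α₁, β₁}) := by
    by_cases hαα : α₀ = α₁
    · rw [hαα]
    · exact stepA α₀ hα₀ α₁ hα₁ β₁ hβ₁ hαα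
  have e3 : c F₁ = 0 := by simp only [hc]; rw [dif_neg hF₁C']
  apply hgF₀
  rw [← e0, hF₀s, e1, e2, ← hF₁s, e3]

end Min

end St12

theorem stmt12 (𝔽 : Type*) [Field 𝔽] [CharP 𝔽 2] (n k : ℕ) (hk : 2 ≤ k) (hkn : k + 3 ≤ n) :
    ∃ Sk : Finset (Finset (Fin n)), (∀ F ∈ Sk, F.card = k) ∧
      Triangulable 𝔽 n k Sk ∧ ¬ StronglyTriangulable 𝔽 n k Sk ∧
      ∀ V : Finset (Fin n), V.card = k - 1 → ¬ SimplicialFace k Sk V := by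
  classical
  refine ⟨St12.SkS n k hkn, fun F hF => St12.card_of_mem_SkS hkn hF, ?_, ?_, ?_⟩
  · -- Triangulable
    unfold Triangulable
    apply le_antisymm
    · rw [Submodule.span_le]
      rintro v ⟨X, hXc, hXf, rfl⟩
      rw [SetLike.mem_coe, LinearMap.mem_ker]
      have hface : ∀ F ⊆ X, F.card = k → F ∈ St12.SkS n k hkn := by
        rcases hXf with h | h
        · exfalso; omega
        · exact h
      exact St12.bdry_pbdry hkn hk hXc hface
    · intro z hz
      rw [St12.ker_rep hkn hk z (LinearMap.mem_ker.1 hz)]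
      apply Submodule.sum_mem
      intro F hF
      have huF : St12.uu n k hkn ∉ F.1 := (Finset.mem_filter.1 hF).2
      obtain ⟨α, hα, β, hβ, hshape⟩ := St12.shapeC hkn F.2 huF
      apply Submodule.smul_mem
      apply Submodule.subset_span
      refine ⟨insert (St12.uu n k hkn) F.1, ?_, ?_, rfl⟩
      · rw [hshape]
        exact St12.Fac_card hkn hα hβ
      · refine Or.inr ?_
        rw [hshape]
        exact St12.Fac_ksub_mem hkn hα hβ
  · -- not strongly triangulable
    rintro ⟨m', Xs, hXs, hspan, hcirc⟩
    have hCCcirc : SimCircuit 𝔽 n k (St12.SkS n k hkn) (St12.CC n k hkn) :=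
      ⟨Finset.filter_subset _ _, St12.CC_dependent hk hkn,
        fun C' hC' => St12.CC_min hk hkn hC'⟩
    obtain ⟨s, idx, a, Cv, ha, hsupp, hCv, hunion⟩ := hcirc _ hCCcirc
    rcases Nat.eq_zero_or_pos s with hs | hs
    · subst hs
      have hCv0 : Cv = 0 := by rw [hCv]; simp
      have hCCempty : St12.CC n k hkn = (∅ : Finset (Finset (Fin n))) := by
        rw [← hsupp, hCv0]
        simp [suppFin]
      obtain ⟨F, hF⟩ := St12.CC_nonempty hk hkn
      rw [hCCempty] at hF
      simp at hF
    · have hu : St12.uu n k hkn ∈ Xs (idx ⟨0, hs⟩) := by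
        obtain ⟨hcard, hface⟩ := hXs (idx ⟨0, hs⟩)
        have hface' : ∀ F ⊆ Xs (idx ⟨0, hs⟩), F.card = k → F ∈ St12.SkS n k hkn := by
          rcases hface with h | h
          · exfalso; omega
          · exact h
        obtain ⟨α, hα, β, hβ, hXeq⟩ := St12.face_k1 hkn hk hcard hface'
        rw [hXeq, St12.Fac]
        exact Finset.mem_insert_self _ _
      have hmem : St12.uu n k hkn ∈ (St12.CC n k hkn).biUnion id := by
        rw [hunion]
        exact Finset.mem_biUnion.2 ⟨⟨0, hs⟩, Finset.mem_univ _, hu⟩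
      obtain ⟨F, hFCC, huF⟩ := Finset.mem_biUnion.1 hmem
      exact ((St12.mem_CC hkn).1 hFCC).2 huF
  · intro V hV
    exact St12.not_simplicial hkn hk hV
end

section
/- (Crapo–Rota duality) Let n and k be integers with 2 ≤ k ≤ n − 2 and let 𝔽 be a field. Then the dual matroid of the full simplicial matroid Sim_k^n(C([n],k)) over 𝔽 is isomorphic to the full simplicial matroid Sim_{n−k}^n(C([n],n−k)) over 𝔽, via the bijection X ↦ [n] ∖ X between C([n],k) and C([n],n−k). -/
/-!
Common definitions for simplicial matroids, following Cordovil–Lemos–Linhares Sales,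
"Dirac's theorem on simplicial matroids".

We model `[n] = {1,…,n}` by `Fin n`, and a subset of `[n]` by a `Finset (Fin n)`.
A family `S_k ⊆ C([n],k)` is a `Finset (Finset (Fin n))` (all of whose members
have cardinality `k`, which is imposed by hypotheses in the theorems).
-/

open Finset

/-! ### Auxiliary lemmas for Crapo–Rota duality -/

lemma inc_erase {n : ℕ} {F : Finset (Fin n)} {i : Fin n} (hi : i ∈ F) :
    inc (F.erase i) F = (-1 : ℤ) ^ (F.filter (fun j => j ≤ i)).card := by
  rw [inc, Finset.sum_eq_single i]
  · simp
  · intro j hj hji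
    rw [if_neg]
    intro h
    have : i ∉ F.erase i := Finset.notMem_erase i F
    rw [h] at this
    exact this (Finset.mem_erase.mpr ⟨(Ne.symm hji), hi⟩)
  · exact fun h => absurd hi h

lemma inc_eq_zero {n : ℕ} {F' F : Finset (Fin n)} (h : ∀ i ∈ F, F' ≠ F.erase i) :
    inc F' F = 0 := by
  rw [inc]
  exact Finset.sum_eq_zero fun i hi => if_neg (h i hi)

lemma inc_insert {n : ℕ} {W : Finset (Fin n)} {b : Fin n} (hb : b ∉ W) :
    inc W (insert b W) = (-1 : ℤ) ^ ((insert b W).filter (fun j => j ≤ b)).card := by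
  have : W = (insert b W).erase b := by rw [Finset.erase_insert hb]
  calc inc W (insert b W) = inc ((insert b W).erase b) (insert b W) := by rw [← this]
    _ = _ := inc_erase (Finset.mem_insert_self b W)

lemma sum_inc_reindex {n m : ℕ} (𝔽 : Type*) [Field 𝔽] (W : Finset (Fin n)) (hW : W.card = m)
    (g : Finset (Fin n) → 𝔽) :
    ∑ V ∈ Finset.powersetCard (m+1) (Finset.univ : Finset (Fin n)), g V * ((inc W V : ℤ) : 𝔽)
      = ∑ b ∈ Wᶜ, g (insert b W) * ((-1 : 𝔽) ^ ((insert b W).filter (fun j => j ≤ b)).card) := by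
  have hsub : Wᶜ.image (fun b => insert b W) ⊆ Finset.powersetCard (m+1) Finset.univ := by
    intro V hV
    simp only [Finset.mem_image, Finset.mem_compl] at hV
    obtain ⟨b, hb, rfl⟩ := hV
    rw [Finset.mem_powersetCard]
    exact ⟨Finset.subset_univ _, by rw [Finset.card_insert_of_notMem hb, hW]⟩
  rw [← Finset.sum_subset hsub]
  · rw [Finset.sum_image]
    · apply Finset.sum_congr rfl
      intro b hb
      rw [Finset.mem_compl] at hb
      rw [inc_insert hb]
      push_cast
      ring
    · intro b hb c hc h
      rw [Finset.mem_coe, Finset.mem_compl] at hb hc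
      have : b ∈ insert c W := by
        have h2 : insert b W = insert c W := h
        exact h2 ▸ Finset.mem_insert_self b W
      rcases Finset.mem_insert.mp this with h' | h'
      · exact h'
      · exact absurd h' hb
  · intro V hV hVn
    have : inc W V = 0 := by
      apply inc_eq_zero
      intro i hi hWe
      apply hVn
      simp only [Finset.mem_image, Finset.mem_compl]
      refine ⟨i, ?_, ?_⟩
      · rw [hWe]; exact Finset.notMem_erase i V
      · rw [hWe, Finset.insert_erase hi]
    rw [this]
    simp

lemma card_filter_le_erase_lt {n : ℕ} {S : Finset (Fin n)} {a b : Fin n} (h : a < b) :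
    (((S.erase b)).filter (fun j => j ≤ a)).card = ((S.filter (fun j => j ≤ a))).card := by
  rw [Finset.filter_erase, Finset.erase_eq_of_notMem]
  simp only [Finset.mem_filter, not_and]
  intro _
  exact not_le.mpr h

lemma card_filter_le_erase_le {n : ℕ} {S : Finset (Fin n)} {a b : Fin n} (h : b ≤ a)
    (hb : b ∈ S) :
    (((S.erase b)).filter (fun j => j ≤ a)).card + 1 = ((S.filter (fun j => j ≤ a))).card := by
  rw [Finset.filter_erase]
  exact Finset.card_erase_add_one (Finset.mem_filter.mpr ⟨hb, h⟩)

lemma sign_antisym {n : ℕ} (𝔽 : Type*) [Field 𝔽] {V : Finset (Fin n)} {a b : Fin n}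
    (ha : a ∈ V) (hb : b ∈ V) (hab : a ≠ b) :
    (-1 : 𝔽) ^ (V.filter (fun j => j ≤ b)).card *
        (-1 : 𝔽) ^ ((V.erase b).filter (fun j => j ≤ a)).card
      = -((-1 : 𝔽) ^ (V.filter (fun j => j ≤ a)).card *
        (-1 : 𝔽) ^ ((V.erase a).filter (fun j => j ≤ b)).card) := by
  rcases lt_or_gt_of_ne hab with h | h
  · rw [card_filter_le_erase_lt h, ← card_filter_le_erase_le (le_of_lt h) ha]
    ring
  · rw [card_filter_le_erase_lt h, ← card_filter_le_erase_le (le_of_lt h) hb]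
    ring

open scoped Classical in
lemma dd_zero {n : ℕ} (𝔽 : Type*) [Field 𝔽] {m : ℕ} {U V : Finset (Fin n)} (hU : U.card = m) :
    ∑ F ∈ Finset.powersetCard (m+1) (Finset.univ : Finset (Fin n)),
        ((inc U F : ℤ) : 𝔽) * ((inc F V : ℤ) : 𝔽) = 0 := by
  have step1 : ∑ F ∈ Finset.powersetCard (m+1) (Finset.univ : Finset (Fin n)),
      ((inc U F : ℤ) : 𝔽) * ((inc F V : ℤ) : 𝔽)
      = ∑ a ∈ Uᶜ, ((inc (insert a U) V : ℤ) : 𝔽) *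
          ((-1 : 𝔽) ^ ((insert a U).filter (fun j => j ≤ a)).card) := by
    rw [← sum_inc_reindex 𝔽 U hU (fun F => ((inc F V : ℤ) : 𝔽))]
    apply Finset.sum_congr rfl
    intro F _
    ring
  rw [step1]
  -- expand inc (insert a U) V as a sum over b ∈ V
  have step2 : ∀ a ∈ Uᶜ, ((inc (insert a U) V : ℤ) : 𝔽) *
      ((-1 : 𝔽) ^ ((insert a U).filter (fun j => j ≤ a)).card)
      = ∑ b ∈ (Finset.univ : Finset (Fin n)),
          if a ∉ U ∧ b ∈ V ∧ insert a U = V.erase b then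
            (-1 : 𝔽) ^ (V.filter (fun j => j ≤ b)).card *
              (-1 : 𝔽) ^ ((V.erase b).filter (fun j => j ≤ a)).card
          else 0 := by
    intro a ha
    rw [Finset.mem_compl] at ha
    rw [inc]
    push_cast
    rw [Finset.sum_mul]
    rw [← Finset.sum_subset (Finset.subset_univ V)]
    · apply Finset.sum_congr rfl
      intro b hb
      by_cases h : insert a U = V.erase b
      · rw [if_pos h, if_pos ⟨ha, hb, h⟩, h]
      · rw [if_neg h, if_neg (by tauto), zero_mul]
    · intro b _ hbV
      rw [if_neg (by tauto)]
  rw [Finset.sum_congr rfl step2]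
  -- now a double sum over Uᶜ × univ; extend to univ × univ and use the swap involution
  rw [← Finset.sum_product']
  rw [Finset.sum_subset (Finset.subset_univ (Uᶜ ×ˢ (Finset.univ : Finset (Fin n))))
    (by
      intro p _ hp
      rw [Finset.mem_product, Finset.mem_compl] at hp
      rw [if_neg]
      intro hc
      exact hp ⟨by simpa using hc.1, Finset.mem_univ _⟩)]
  apply Finset.sum_involution (fun p _ => (p.2, p.1))
  · intro p _
    by_cases h : p.1 ∉ U ∧ p.2 ∈ V ∧ insert p.1 U = V.erase p.2
    · obtain ⟨h1, h2, h3⟩ := h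
      have hp1V : p.1 ∈ V := by
        have : p.1 ∈ insert p.1 U := Finset.mem_insert_self _ _
        rw [h3] at this
        exact Finset.mem_of_mem_erase this
      have hne : p.1 ≠ p.2 := by
        intro he
        have : p.1 ∈ insert p.1 U := Finset.mem_insert_self _ _
        rw [h3, he] at this
        exact Finset.notMem_erase _ _ this
      have hp2U : p.2 ∉ U := by
        intro hc
        have : p.2 ∈ insert p.1 U := Finset.mem_insert_of_mem hc
        rw [h3] at this
        exact Finset.notMem_erase _ _ this
      have hU' : U = (V.erase p.2).erase p.1 := by
        rw [← h3, Finset.erase_insert h1]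
      have h3' : insert p.2 U = V.erase p.1 := by
        rw [hU', Finset.erase_right_comm, Finset.insert_erase
          (Finset.mem_erase.mpr ⟨Ne.symm hne, h2⟩)]
      rw [if_pos ⟨h1, h2, h3⟩, if_pos ⟨hp2U, hp1V, h3'⟩]
      rw [sign_antisym 𝔽 hp1V h2 hne]
      ring
    · rw [if_neg h, if_neg]
      · ring
      intro hc
      obtain ⟨h1, h2, h3⟩ := hc
      -- symmetric: condition for (p.2,p.1) implies condition for p
      apply h
      have h1' : p.2 ∉ U := h1
      have h2' : p.1 ∈ V := h2
      have h3' : insert p.2 U = V.erase p.1 := h3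
      have hp2V : p.2 ∈ V := by
        have : p.2 ∈ insert p.2 U := Finset.mem_insert_self _ _
        rw [h3'] at this
        exact Finset.mem_of_mem_erase this
      have hne : p.2 ≠ p.1 := by
        intro he
        have : p.2 ∈ insert p.2 U := Finset.mem_insert_self _ _
        rw [h3', he] at this
        exact Finset.notMem_erase _ _ this
      have hp1U : p.1 ∉ U := by
        intro hcc
        have : p.1 ∈ insert p.2 U := Finset.mem_insert_of_mem hcc
        rw [h3'] at this
        exact Finset.notMem_erase _ _ this
      have hU' : U = (V.erase p.1).erase p.2 := by
        rw [← h3', Finset.erase_insert h1']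
      refine ⟨hp1U, hp2V, ?_⟩
      rw [hU', Finset.erase_right_comm, Finset.insert_erase
        (Finset.mem_erase.mpr ⟨Ne.symm hne, h2'⟩)]
  · intro p _ hne hc
    apply hne
    have h21 : p.2 = p.1 := congrArg Prod.fst hc
    rw [if_neg]
    rintro ⟨h1, h2, h3⟩
    have : p.1 ∈ insert p.1 U := Finset.mem_insert_self _ _
    rw [h3, ← h21] at this
    exact Finset.notMem_erase _ _ this
  · intro p _; exact Finset.mem_univ _
  · intro p _; rfl

lemma neg_one_pow_parity {R : Type*} [Ring R] {a b : ℕ}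
    (h : a % 2 = b % 2) : (-1 : R) ^ a = (-1 : R) ^ b := by
  rw [neg_one_pow_eq_pow_mod_two a, neg_one_pow_eq_pow_mod_two b, h]

/-- Part D : complement sign identity -/
lemma inc_compl {n : ℕ} {F V : Finset (Fin n)} (hcard : F.card + 1 = V.card) :
    inc Vᶜ Fᶜ = (-1 : ℤ) ^ (∑ j ∈ V, (j : ℕ)) * (-1 : ℤ) ^ (∑ j ∈ F, (j : ℕ)) * inc F V := by
  by_cases hFV : F ⊆ V
  · -- V = insert i F for some i ∉ F
    have hcd : (V \ F).card = 1 := by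
      rw [Finset.card_sdiff_of_subset hFV]; omega
    obtain ⟨i, hi⟩ := Finset.card_eq_one.mp hcd
    have hiV : i ∈ V := by
      have : i ∈ V \ F := hi ▸ Finset.mem_singleton_self i
      exact (Finset.mem_sdiff.mp this).1
    have hiF : i ∉ F := by
      have : i ∈ V \ F := hi ▸ Finset.mem_singleton_self i
      exact (Finset.mem_sdiff.mp this).2
    have hV : V = insert i F := by
      have h1 : V = F ∪ (V \ F) := by rw [Finset.union_sdiff_of_subset hFV]
      rw [h1, hi]
      ext x; simp [or_comm]
    subst hV
    have hcompl : Fᶜ = insert i (insert i F)ᶜ := by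
      rw [Finset.compl_insert, Finset.insert_erase]
      rw [Finset.mem_compl]; exact hiF
    have hiVc : i ∈ Fᶜ := Finset.mem_compl.mpr hiF
    have h1 : inc (insert i F)ᶜ Fᶜ = (-1 : ℤ) ^ (Fᶜ.filter (fun j => j ≤ i)).card := by
      rw [Finset.compl_insert]
      exact inc_erase hiVc
    have h2 : inc F (insert i F) = (-1 : ℤ) ^ ((insert i F).filter (fun j => j ≤ i)).card :=
      inc_insert hiF
    rw [h1, h2]
    -- exponent bookkeeping
    have hsum : ∑ j ∈ insert i F, (j : ℕ) = (i : ℕ) + ∑ j ∈ F, (j : ℕ) :=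
      Finset.sum_insert hiF
    have hfil : ((insert i F).filter (fun j => j ≤ i)).card
        = (F.filter (fun j => j ≤ i)).card + 1 := by
      rw [Finset.filter_insert, if_pos (le_refl i),
        Finset.card_insert_of_notMem (fun hc => hiF (Finset.mem_filter.mp hc).1)]
    have hpart : (F.filter (fun j => j ≤ i)).card + (Fᶜ.filter (fun j => j ≤ i)).card
        = (i : ℕ) + 1 := by
      have hd : Disjoint (F.filter (fun j => j ≤ i)) (Fᶜ.filter (fun j => j ≤ i)) :=
        Finset.disjoint_filter_filter disjoint_compl_right
      rw [← Finset.card_union_of_disjoint hd, ← Finset.filter_union,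
        Finset.union_compl]
      have : Finset.univ.filter (fun j => j ≤ i) = Finset.Iic i := by
        ext x; simp
      rw [this]
      simp [Nat.card_Iic]
    rw [hsum, hfil]
    have key : (-1 : ℤ) ^ ((i:ℕ) + ∑ j ∈ F, (j:ℕ)) * (-1:ℤ) ^ (∑ j ∈ F, (j:ℕ)) *
        (-1:ℤ) ^ ((F.filter (fun j => j ≤ i)).card + 1)
        = (-1:ℤ) ^ (((i:ℕ) + ∑ j ∈ F, (j:ℕ)) + (∑ j ∈ F, (j:ℕ)) +
            ((F.filter (fun j => j ≤ i)).card + 1)) := by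
      ring
    rw [key]
    exact neg_one_pow_parity (by omega)
  · -- both incidences vanish
    have h1 : inc F V = 0 := by
      apply inc_eq_zero
      intro i hi h
      exact hFV (h ▸ Finset.erase_subset i V)
    have h2 : inc Vᶜ Fᶜ = 0 := by
      apply inc_eq_zero
      intro i hi h
      apply hFV
      have : Vᶜ ⊆ Fᶜ := h ▸ Finset.erase_subset i Fᶜ
      exact Finset.compl_subset_compl.mp this
    rw [h1, h2, mul_zero]

/-- Part C : pointwise homotopy identity -/
lemma homotopy {n : ℕ} (𝔽 : Type*) [Field 𝔽] {m : ℕ} (hn : 0 < n) (μ : Finset (Fin n) → 𝔽)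
    (hker : ∀ U : Finset (Fin n), U.card = m →
      ∑ F ∈ Finset.powersetCard (m+1) (Finset.univ : Finset (Fin n)),
        μ F * ((inc U F : ℤ) : 𝔽) = 0)
    {F0 : Finset (Fin n)} (hF0 : F0.card = m + 1) :
    μ F0 = ∑ V ∈ Finset.powersetCard (m+2) (Finset.univ : Finset (Fin n)),
      (if (⟨0, hn⟩ : Fin n) ∈ V then -μ (V.erase ⟨0, hn⟩) else 0) * ((inc F0 V : ℤ) : 𝔽) := by
  set z : Fin n := ⟨0, hn⟩ with hzdef
  have hz_le : ∀ b : Fin n, z ≤ b := fun b => by simp [hzdef, Fin.le_def]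
  have hle_z : ∀ j : Fin n, j ≤ z → j = z := fun j hj => Fin.ext (Nat.le_zero.mp hj)
  have hfilz : ∀ S : Finset (Fin n), z ∈ S → S.filter (fun j => j ≤ z) = {z} := by
    intro S hzS
    ext j
    simp only [Finset.mem_filter, Finset.mem_singleton]
    constructor
    · rintro ⟨_, hj⟩; exact hle_z j hj
    · rintro rfl; exact ⟨hzS, le_refl z⟩
  have hfil_ins : ∀ (S : Finset (Fin n)) (b : Fin n), z ∉ S →
      ((insert z S).filter (fun j => j ≤ b)).card = (S.filter (fun j => j ≤ b)).card + 1 := by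
    intro S b hzS
    rw [Finset.filter_insert, if_pos (hz_le b),
      Finset.card_insert_of_notMem (fun hc => hzS (Finset.mem_filter.mp hc).1)]
  rw [sum_inc_reindex 𝔽 F0 hF0
    (fun V => if z ∈ V then -μ (V.erase z) else 0)]
  by_cases hzF : z ∈ F0
  · -- main case: z ∈ F0
    set U := F0.erase z with hUdef
    have hzU : z ∉ U := Finset.notMem_erase z F0
    have hU : U.card = m := by rw [hUdef, Finset.card_erase_of_mem hzF, hF0]; omega
    have hker' := hker U hU
    rw [sum_inc_reindex 𝔽 U hU μ] at hker'
    have hUc : Uᶜ = insert z F0ᶜ := by rw [hUdef, Finset.compl_erase]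
    rw [hUc, Finset.sum_insert (by simp [hzF])] at hker'
    have hzUF : insert z U = F0 := Finset.insert_erase hzF
    rw [hzUF, hfilz F0 hzF] at hker'
    simp only [Finset.card_singleton, pow_one, mul_neg_one] at hker'
    -- hker' : -μ F0 + ∑ b ∈ F0ᶜ, μ (insert b U) * (-1) ^ … = 0
    have key : ∀ b ∈ F0ᶜ,
        (if z ∈ insert b F0 then -μ ((insert b F0).erase z) else 0) *
          (-1 : 𝔽) ^ ((insert b F0).filter (fun j => j ≤ b)).card
        = μ (insert b U) * (-1 : 𝔽) ^ ((insert b U).filter (fun j => j ≤ b)).card := by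
      intro b hb
      rw [Finset.mem_compl] at hb
      have hbz : b ≠ z := fun h => hb (h ▸ hzF)
      have h1 : z ∈ insert b F0 := Finset.mem_insert_of_mem hzF
      have h2 : (insert b F0).erase z = insert b U := by
        rw [hUdef, Finset.erase_insert_of_ne hbz]
      have h3 : insert b F0 = insert z (insert b U) := by
        rw [← hzUF]; exact Finset.insert_comm b z U
      have h4 : z ∉ insert b U := by
        simp only [Finset.mem_insert]
        rintro (h | h)
        · exact hbz h.symm
        · exact hzU h
      rw [if_pos h1, h2, h3, hfil_ins (insert b U) b h4]
      ring
    rw [Finset.sum_congr rfl key]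
    linear_combination -hker'
  · -- easy case: z ∉ F0
    rw [Finset.sum_eq_single z]
    · rw [if_pos (Finset.mem_insert_self z F0), Finset.erase_insert hzF,
        hfilz (insert z F0) (Finset.mem_insert_self z F0)]
      simp
    · intro b hb hbz
      rw [Finset.mem_compl] at hb
      rw [if_neg, zero_mul]
      simp only [Finset.mem_insert]
      rintro (h | h)
      · exact hbz h.symm
      · exact hzF h
    · intro h
      exact absurd (Finset.mem_compl.mpr hzF) h


/-- the sign `(-1)^(sum of elements)` -/
def epsF {n : ℕ} (𝔽 : Type*) [Field 𝔽] (S : Finset (Fin n)) : 𝔽 :=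
  (-1) ^ (∑ j ∈ S, (j : ℕ))

lemma epsF_ne_zero {n : ℕ} (𝔽 : Type*) [Field 𝔽] (S : Finset (Fin n)) : epsF 𝔽 S ≠ 0 :=
  pow_ne_zero _ (neg_ne_zero.mpr one_ne_zero)

lemma epsF_mul_self {n : ℕ} (𝔽 : Type*) [Field 𝔽] (S : Finset (Fin n)) :
    epsF 𝔽 S * epsF 𝔽 S = 1 := by
  rw [epsF, ← pow_add]
  rw [neg_one_pow_parity (b := 0) (by omega), pow_zero]

lemma inc_compl' {n : ℕ} (𝔽 : Type*) [Field 𝔽] {F V : Finset (Fin n)}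
    (hcard : F.card + 1 = V.card) :
    ((inc (Finset.univ \ V) (Finset.univ \ F) : ℤ) : 𝔽)
      = epsF 𝔽 V * epsF 𝔽 F * ((inc F V : ℤ) : 𝔽) := by
  rw [← Finset.compl_eq_univ_sdiff, ← Finset.compl_eq_univ_sdiff, inc_compl hcard]
  push_cast
  rw [epsF, epsF]

lemma lhs_iff {n m : ℕ} (𝔽 : Type*) [Field 𝔽] (hn : 0 < n) (X : Finset (Finset (Fin n)))
    (hX : X ⊆ Finset.powersetCard (m+1) Finset.univ) :
    (simRank 𝔽 n (m+1) (Finset.powersetCard (m+1) (Finset.univ : Finset (Fin n)) \ X)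
      = simRank 𝔽 n (m+1) (Finset.powersetCard (m+1) (Finset.univ : Finset (Fin n))))
    ↔ ¬ ∃ lam : Finset (Fin n) → 𝔽, (∀ F ∉ X, lam F = 0) ∧ (∃ F ∈ X, lam F ≠ 0) ∧
      ∀ V : Finset (Fin n), V.card = m+2 →
        ∑ F ∈ Finset.powersetCard (m+1) (Finset.univ : Finset (Fin n)),
          lam F * ((inc F V : ℤ) : 𝔽) = 0 := by
  classical
  set E := Finset.powersetCard (m+1) (Finset.univ : Finset (Fin n)) with hE
  set a : Finset (Fin n) → ({F : Finset (Fin n) // F.card = m} → 𝔽) :=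
    fun F => bvec 𝔽 n (m+1) F with ha
  set pE := Submodule.span 𝔽 (a '' (E : Set (Finset (Fin n)))) with hpE
  set pC := Submodule.span 𝔽 (a '' ((E \ X : Finset (Finset (Fin n))) : Set (Finset (Fin n))))
    with hpC
  have hle : pC ≤ pE := Submodule.span_mono (Set.image_mono
    (Finset.coe_subset.mpr Finset.sdiff_subset))
  have hrank : (simRank 𝔽 n (m+1) (E \ X) = simRank 𝔽 n (m+1) E) ↔ pC = pE := by
    constructor
    · intro h
      exact Submodule.eq_of_le_of_finrank_eq hle h
    · intro h
      show Module.finrank 𝔽 pC = Module.finrank 𝔽 pE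
      rw [h]
  rw [hrank]
  constructor
  · -- span equality implies no λ as in P
    rintro heq ⟨lam, hsupp, ⟨F0, hF0X, hF0⟩, hperp⟩
    have hF0E : F0 ∈ E := hX hF0X
    have haF0 : a F0 ∈ pC := by
      rw [heq]
      exact Submodule.subset_span ⟨F0, Finset.mem_coe.mpr hF0E, rfl⟩
    rw [hpC, Finsupp.mem_span_image_iff_linearCombination] at haF0
    obtain ⟨l, hlsupp, hlx⟩ := haF0
    rw [Finsupp.mem_supported] at hlsupp
    have hlsupp' : l.support ⊆ E \ X := Finset.coe_subset.mp hlsupp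
    set μ : Finset (Fin n) → 𝔽 := fun F => (if F = F0 then (1:𝔽) else 0) - l F with hμ
    have hkerμ : ∀ U : Finset (Fin n), U.card = m →
        ∑ F ∈ E, μ F * ((inc U F : ℤ) : 𝔽) = 0 := by
      intro U hU
      have h1 : ∑ F ∈ E, (if F = F0 then (1:𝔽) else 0) * ((inc U F : ℤ) : 𝔽)
          = ((inc U F0 : ℤ) : 𝔽) := by
        rw [Finset.sum_eq_single F0]
        · rw [if_pos rfl, one_mul]
        · intro F _ hne
          rw [if_neg hne, zero_mul]
        · intro h; exact absurd hF0E h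
      have h2 : ∑ F ∈ E, l F * ((inc U F : ℤ) : 𝔽) = ((inc U F0 : ℤ) : 𝔽) := by
        have heval := congrFun hlx (⟨U, hU⟩ : {F : Finset (Fin n) // F.card = m})
        rw [Finsupp.linearCombination_apply] at heval
        have hform : (l.sum fun F c => c • a F) ⟨U, hU⟩
            = ∑ F ∈ l.support, l F * ((inc U F : ℤ) : 𝔽) := by
          rw [Finsupp.sum, Finset.sum_apply]
          rfl
        rw [hform] at heval
        rw [← Finset.sum_subset (hlsupp'.trans Finset.sdiff_subset)]
        · exact heval
        · intro F _ hFs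
          rw [Finsupp.notMem_support_iff.mp hFs, zero_mul]
      simp only [hμ, sub_mul, Finset.sum_sub_distrib]
      rw [h1, h2, sub_self]
    have hway1 : ∑ F ∈ E, lam F * μ F = lam F0 := by
      simp only [hμ, mul_sub, Finset.sum_sub_distrib]
      have hA : ∑ F ∈ E, lam F * (if F = F0 then (1:𝔽) else 0) = lam F0 := by
        rw [Finset.sum_eq_single F0]
        · rw [if_pos rfl, mul_one]
        · intro F _ hne
          rw [if_neg hne, mul_zero]
        · intro h; exact absurd hF0E h
      have hB : ∑ F ∈ E, lam F * l F = 0 := by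
        apply Finset.sum_eq_zero
        intro F _
        by_cases hFX : F ∈ X
        · have : F ∉ l.support := fun hc => (Finset.mem_sdiff.mp (hlsupp' hc)).2 hFX
          rw [Finsupp.notMem_support_iff.mp this, mul_zero]
        · rw [hsupp F hFX, zero_mul]
      rw [hA, hB, sub_zero]
    have hway2 : ∑ F ∈ E, lam F * μ F = 0 := by
      have hmu_eq : ∀ F ∈ E, μ F = ∑ V ∈ Finset.powersetCard (m+2) Finset.univ,
          (if (⟨0, hn⟩ : Fin n) ∈ V then -μ (V.erase ⟨0, hn⟩) else 0) * ((inc F V : ℤ) : 𝔽) := by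
        intro F hF
        exact homotopy 𝔽 hn μ hkerμ (Finset.mem_powersetCard.mp hF).2
      calc ∑ F ∈ E, lam F * μ F
          = ∑ F ∈ E, ∑ V ∈ Finset.powersetCard (m+2) Finset.univ,
              (if (⟨0, hn⟩ : Fin n) ∈ V then -μ (V.erase ⟨0, hn⟩) else 0) *
                (lam F * ((inc F V : ℤ) : 𝔽)) := by
            apply Finset.sum_congr rfl
            intro F hF
            rw [hmu_eq F hF, Finset.mul_sum]
            apply Finset.sum_congr rfl
            intro V _
            ring
        _ = ∑ V ∈ Finset.powersetCard (m+2) Finset.univ,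
              (if (⟨0, hn⟩ : Fin n) ∈ V then -μ (V.erase ⟨0, hn⟩) else 0) *
                ∑ F ∈ E, lam F * ((inc F V : ℤ) : 𝔽) := by
            rw [Finset.sum_comm]
            apply Finset.sum_congr rfl
            intro V _
            rw [Finset.mul_sum]
        _ = 0 := by
            apply Finset.sum_eq_zero
            intro V hV
            rw [hperp V (Finset.mem_powersetCard.mp hV).2, mul_zero]
    exact hF0 (hway1.symm.trans hway2)
  · -- no λ implies span equality
    intro hnp
    by_contra hne
    apply hnp
    have hex : ∃ F0 ∈ X, a F0 ∉ pC := by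
      by_contra h
      push_neg at h
      apply hne
      apply le_antisymm hle
      rw [hpE]
      apply Submodule.span_le.mpr
      rintro v ⟨F, hF, rfl⟩
      by_cases hFX : F ∈ X
      · exact h F hFX
      · exact Submodule.subset_span
          ⟨F, Finset.mem_coe.mpr (Finset.mem_sdiff.mpr ⟨Finset.mem_coe.mp hF, hFX⟩), rfl⟩
    obtain ⟨F0, hF0X, hF0p⟩ := hex
    have hv : pC.mkQ (a F0) ≠ 0 := by
      rw [Submodule.mkQ_apply]
      intro hc
      exact hF0p ((Submodule.Quotient.mk_eq_zero pC).mp hc)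
    have hf : ∃ f : Module.Dual 𝔽 (({F : Finset (Fin n) // F.card = m} → 𝔽) ⧸ pC),
        f (pC.mkQ (a F0)) ≠ 0 := by
      by_contra h
      push_neg at h
      exact hv ((Module.forall_dual_apply_eq_zero_iff 𝔽 _).mp h)
    obtain ⟨f, hf⟩ := hf
    set L : ({F : Finset (Fin n) // F.card = m} → 𝔽) →ₗ[𝔽] 𝔽 := f.comp pC.mkQ with hL
    refine ⟨fun F => if F ∈ E then L (a F) else 0, ?_, ⟨F0, hF0X, ?_⟩, ?_⟩
    · intro F hFX
      show (if F ∈ E then L (a F) else 0) = 0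
      by_cases hFE : F ∈ E
      · rw [if_pos hFE]
        have hmem : a F ∈ pC := Submodule.subset_span
          ⟨F, Finset.mem_coe.mpr (Finset.mem_sdiff.mpr ⟨hFE, hFX⟩), rfl⟩
        show f (pC.mkQ (a F)) = 0
        rw [Submodule.mkQ_apply, (Submodule.Quotient.mk_eq_zero pC).mpr hmem, map_zero]
      · rw [if_neg hFE]
    · show (if F0 ∈ E then L (a F0) else 0) ≠ 0
      rw [if_pos (hX hF0X)]
      exact hf
    · intro V hV
      have hzero : ∑ F ∈ E, ((inc F V : ℤ) : 𝔽) • a F = 0 := by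
        funext u
        rw [Finset.sum_apply]
        have : ∀ F ∈ E, (((inc F V : ℤ) : 𝔽) • a F) u
            = ((inc u.1 F : ℤ) : 𝔽) * ((inc F V : ℤ) : 𝔽) := by
          intro F _
          simp only [Pi.smul_apply, smul_eq_mul]
          rw [mul_comm]
          rfl
        rw [Finset.sum_congr rfl this, hE, dd_zero 𝔽 u.2]
        rfl
      calc ∑ F ∈ E, (if F ∈ E then L (a F) else 0) * ((inc F V : ℤ) : 𝔽)
          = ∑ F ∈ E, L (((inc F V : ℤ) : 𝔽) • a F) := by
            apply Finset.sum_congr rfl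
            intro F hF
            rw [if_pos hF, map_smul, smul_eq_mul, mul_comm]
        _ = L (∑ F ∈ E, ((inc F V : ℤ) : 𝔽) • a F) := (map_sum L _ _).symm
        _ = 0 := by rw [hzero, map_zero]


lemma pair_eval {n m : ℕ} (𝔽 : Type*) [Field 𝔽] (hn : m + 3 ≤ n) (X : Finset (Finset (Fin n)))
    (hX : X ⊆ Finset.powersetCard (m+1) Finset.univ)
    (t : Finset (Fin n) → 𝔽) (W' : Csets n (n - (m+1) - 1)) :
    ∑ F ∈ X, t F * ((inc W'.1 (Finset.univ \ F) : ℤ) : 𝔽)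
      = epsF 𝔽 (Finset.univ \ W'.1) *
        ∑ F ∈ X, (epsF 𝔽 F * t F) * ((inc F (Finset.univ \ W'.1) : ℤ) : 𝔽) := by
  have hW : W'.1 = Finset.univ \ (Finset.univ \ W'.1) := by
    rw [Finset.sdiff_sdiff_self_left, Finset.univ_inter]
  rw [Finset.mul_sum]
  apply Finset.sum_congr rfl
  intro F hF
  have hFV : F ⊆ Finset.univ \ W'.1 → True := fun _ => trivial
  calc t F * ((inc W'.1 (Finset.univ \ F) : ℤ) : 𝔽)
      = t F * ((inc (Finset.univ \ (Finset.univ \ W'.1)) (Finset.univ \ F) : ℤ) : 𝔽) := by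
        rw [← hW]
    _ = t F * (epsF 𝔽 (Finset.univ \ W'.1) * epsF 𝔽 F *
          ((inc F (Finset.univ \ W'.1) : ℤ) : 𝔽)) := by
        rw [inc_compl' 𝔽 ?hc]
        case hc =>
          have h1 : F.card = m + 1 := (Finset.mem_powersetCard.mp (hX hF)).2
          have h2 : W'.1 ⊆ Finset.univ := Finset.subset_univ _
          have h3 : (Finset.univ \ W'.1).card = n - W'.1.card := by
            rw [Finset.card_sdiff_of_subset h2, Finset.card_univ, Fintype.card_fin]
          have h4 : W'.1.card = n - (m+1) - 1 := W'.2
          have h5 : F ⊆ Finset.univ := Finset.subset_univ _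
          have h6 : F.card ≤ n := by
            have := Finset.card_le_card h5
            rwa [Finset.card_univ, Fintype.card_fin] at this
          rw [h1, h3, h4]
          omega
    _ = epsF 𝔽 (Finset.univ \ W'.1) *
          ((epsF 𝔽 F * t F) * ((inc F (Finset.univ \ W'.1) : ℤ) : 𝔽)) := by ring

lemma sum_Y_eval {n m : ℕ} (𝔽 : Type*) [Field 𝔽] (hn : m + 3 ≤ n) (X : Finset (Finset (Fin n)))
    (hX : X ⊆ Finset.powersetCard (m+1) Finset.univ)
    (h : Finset (Fin n) → 𝔽) (W' : Csets n (n - (m+1) - 1)) :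
    ∑ i : {x // x ∈ X.image (fun F => Finset.univ \ F)},
        h i.1 * ((inc W'.1 i.1 : ℤ) : 𝔽)
      = epsF 𝔽 (Finset.univ \ W'.1) *
        ∑ F ∈ X, (epsF 𝔽 F * h (Finset.univ \ F)) *
          ((inc F (Finset.univ \ W'.1) : ℤ) : 𝔽) := by
  have hcompl2 : ∀ F : Finset (Fin n), Finset.univ \ (Finset.univ \ F) = F := by
    intro F; rw [Finset.sdiff_sdiff_self_left, Finset.univ_inter]
  have hinj : ∀ F1 ∈ X, ∀ F2 ∈ X, Finset.univ \ F1 = Finset.univ \ F2 → F1 = F2 := by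
    intro F1 _ F2 _ hh
    rw [← hcompl2 F1, hh, hcompl2 F2]
  rw [Finset.sum_coe_sort (X.image (fun F => Finset.univ \ F))
      (fun G => h G * ((inc W'.1 G : ℤ) : 𝔽)),
    Finset.sum_image hinj]
  exact pair_eval 𝔽 hn X hX (fun F => h (Finset.univ \ F)) W'

lemma rhs_iff {n m : ℕ} (𝔽 : Type*) [Field 𝔽] (hn : m + 3 ≤ n) (X : Finset (Finset (Fin n)))
    (hX : X ⊆ Finset.powersetCard (m+1) Finset.univ) :
    SimIndep 𝔽 n (n - (m+1)) (Finset.powersetCard (n - (m+1)) (Finset.univ : Finset (Fin n)))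
        (X.image fun F => Finset.univ \ F)
    ↔ ¬ ∃ lam : Finset (Fin n) → 𝔽, (∀ F ∉ X, lam F = 0) ∧ (∃ F ∈ X, lam F ≠ 0) ∧
      ∀ V : Finset (Fin n), V.card = m+2 →
        ∑ F ∈ Finset.powersetCard (m+1) (Finset.univ : Finset (Fin n)),
          lam F * ((inc F V : ℤ) : 𝔽) = 0 := by
  classical
  have hcompl2 : ∀ F : Finset (Fin n), Finset.univ \ (Finset.univ \ F) = F := by
    intro F; rw [Finset.sdiff_sdiff_self_left, Finset.univ_inter]
  have hYE : (X.image fun F => Finset.univ \ F) ⊆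
      Finset.powersetCard (n - (m+1)) Finset.univ := by
    intro G hG
    obtain ⟨F, hF, rfl⟩ := Finset.mem_image.mp hG
    refine Finset.mem_powersetCard.mpr ⟨Finset.subset_univ _, ?_⟩
    rw [Finset.card_sdiff_of_subset (Finset.subset_univ _), Finset.card_univ, Fintype.card_fin,
      (Finset.mem_powersetCard.mp (hX hF)).2]
  -- card of the complement of a (m+2)-set
  have hWcard : ∀ V : Finset (Fin n), V.card = m + 2 →
      (Finset.univ \ V).card = n - (m+1) - 1 := by
    intro V hV
    rw [Finset.card_sdiff_of_subset (Finset.subset_univ _), Finset.card_univ, Fintype.card_fin, hV]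
    omega
  constructor
  · rintro ⟨hsub, hli⟩ ⟨lam, hsupp, ⟨F0, hF0X, hF0⟩, hperp⟩
    set g : {x // x ∈ X.image fun F => Finset.univ \ F} → 𝔽 :=
      fun i => epsF 𝔽 (Finset.univ \ i.1) * lam (Finset.univ \ i.1) with hg
    have hsum : ∑ i, g i • bvec 𝔽 n (n - (m+1)) i.1 = 0 := by
      funext W'
      simp only [Finset.sum_apply, Pi.smul_apply, smul_eq_mul, Pi.zero_apply]
      have hstep : ∀ i : {x // x ∈ X.image fun F => Finset.univ \ F},
          g i * bvec 𝔽 n (n - (m+1)) i.1 W'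
          = (fun G => epsF 𝔽 (Finset.univ \ G) * lam (Finset.univ \ G)) i.1 *
            ((inc W'.1 i.1 : ℤ) : 𝔽) := fun i => rfl
      rw [Finset.sum_congr rfl (fun i _ => hstep i),
        sum_Y_eval 𝔽 hn X hX (fun G => epsF 𝔽 (Finset.univ \ G) * lam (Finset.univ \ G)) W']
      have hterm : ∀ F ∈ X, (epsF 𝔽 F *
            (epsF 𝔽 (Finset.univ \ (Finset.univ \ F)) * lam (Finset.univ \ (Finset.univ \ F)))) *
            ((inc F (Finset.univ \ W'.1) : ℤ) : 𝔽)
          = lam F * ((inc F (Finset.univ \ W'.1) : ℤ) : 𝔽) := by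
        intro F _
        rw [hcompl2 F, ← mul_assoc, epsF_mul_self, one_mul]
      rw [Finset.sum_congr rfl hterm]
      have hVcard : (Finset.univ \ W'.1).card = m + 2 := by
        rw [Finset.card_sdiff_of_subset (Finset.subset_univ _), Finset.card_univ, Fintype.card_fin, W'.2]
        omega
      have hext : ∑ F ∈ X, lam F * ((inc F (Finset.univ \ W'.1) : ℤ) : 𝔽)
          = ∑ F ∈ Finset.powersetCard (m+1) (Finset.univ : Finset (Fin n)),
              lam F * ((inc F (Finset.univ \ W'.1) : ℤ) : 𝔽) := by
        apply Finset.sum_subset hX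
        intro F _ hFX
        rw [hsupp F hFX, zero_mul]
      rw [hext, hperp _ hVcard, mul_zero]
    have hall := Fintype.linearIndependent_iff.mp hli g hsum
    have hi0 : (Finset.univ \ F0) ∈ X.image (fun F => Finset.univ \ F) :=
      Finset.mem_image_of_mem _ hF0X
    have := hall ⟨Finset.univ \ F0, hi0⟩
    rw [hg] at this
    simp only at this
    rw [hcompl2 F0] at this
    rcases mul_eq_zero.mp this with h | h
    · exact epsF_ne_zero 𝔽 F0 h
    · exact hF0 h
  · intro hnp
    refine ⟨hYE, ?_⟩
    by_contra hnli
    apply hnp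
    obtain ⟨g, hg0, i0, hgi0⟩ := Fintype.not_linearIndependent_iff.mp hnli
    set gh : Finset (Fin n) → 𝔽 :=
      fun G => if h : G ∈ X.image (fun F => Finset.univ \ F) then g ⟨G, h⟩ else 0 with hgh
    have hghg : ∀ i : {x // x ∈ X.image fun F => Finset.univ \ F}, gh i.1 = g i := by
      intro i
      rw [hgh]
      simp only
      rw [dif_pos i.2]
    refine ⟨fun F => if F ∈ X then epsF 𝔽 F * gh (Finset.univ \ F) else 0, ?_, ?_, ?_⟩
    · intro F hFX
      show (if F ∈ X then epsF 𝔽 F * gh (Finset.univ \ F) else 0) = 0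
      rw [if_neg hFX]
    · obtain ⟨F0, hF0X, hF0c⟩ := Finset.mem_image.mp i0.2
      refine ⟨F0, hF0X, ?_⟩
      show (if F0 ∈ X then epsF 𝔽 F0 * gh (Finset.univ \ F0) else 0) ≠ 0
      rw [if_pos hF0X]
      rw [hF0c, hghg i0]
      exact mul_ne_zero (epsF_ne_zero 𝔽 F0) hgi0
    · intro V hV
      set W' : Csets n (n - (m+1) - 1) := ⟨Finset.univ \ V, hWcard V hV⟩ with hW'
      have heval := congrFun hg0 W'
      simp only [Finset.sum_apply, Pi.smul_apply, smul_eq_mul, Pi.zero_apply] at heval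
      have hstep : ∀ i : {x // x ∈ X.image fun F => Finset.univ \ F},
          g i * bvec 𝔽 n (n - (m+1)) i.1 W'
          = gh i.1 * ((inc W'.1 i.1 : ℤ) : 𝔽) := by
        intro i
        rw [hghg i]
        rfl
      rw [Finset.sum_congr rfl (fun i _ => hstep i), sum_Y_eval 𝔽 hn X hX gh W'] at heval
      have hVW : Finset.univ \ W'.1 = V := hcompl2 V
      rw [hVW] at heval
      rcases mul_eq_zero.mp heval with h | h
      · exact absurd h (epsF_ne_zero 𝔽 _)
      · have hgoal : ∑ F ∈ Finset.powersetCard (m+1) (Finset.univ : Finset (Fin n)),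
            (if F ∈ X then epsF 𝔽 F * gh (Finset.univ \ F) else 0) * ((inc F V : ℤ) : 𝔽)
            = ∑ F ∈ X, (epsF 𝔽 F * gh (Finset.univ \ F)) * ((inc F V : ℤ) : 𝔽) := by
          rw [← Finset.sum_subset hX]
          · apply Finset.sum_congr rfl
            intro F hF
            rw [if_pos hF]
          · intro F _ hFX
            rw [if_neg hFX, zero_mul]
        rw [hgoal]
        exact h

theorem stmt13 (𝔽 : Type*) [Field 𝔽] (n k : ℕ) (hk : 2 ≤ k) (hkn : k + 2 ≤ n) :
    ∀ X ⊆ Finset.powersetCard k (Finset.univ : Finset (Fin n)),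
      (simRank 𝔽 n k (Finset.powersetCard k (Finset.univ : Finset (Fin n)) \ X)
          = simRank 𝔽 n k (Finset.powersetCard k (Finset.univ : Finset (Fin n)))
        ↔ SimIndep 𝔽 n (n - k) (Finset.powersetCard (n - k) (Finset.univ : Finset (Fin n)))
            (X.image fun F => Finset.univ \ F)) := by
  obtain ⟨m, rfl⟩ : ∃ m, k = m + 1 := ⟨k - 1, by omega⟩
  intro X hX
  rw [lhs_iff 𝔽 (by omega) X hX, rhs_iff 𝔽 (by omega) X hX]
end
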